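/- arXiv:1411.6304 — 3 statements merged into one kernel-verified Lean document; each statement's English description precedes it below -/
import Mathlib

section
/- Let λ>0, μ>0 and let f_∞ be a probability density on the cylinder with M := sup_{k∈ℤ,η∈ℝ} |f̂_∞(k,η)| e^{λ(|k|+|η|)} < ∞. Suppose 2μ ≤ λ and 2μM < λ. Then for every measurable z:[0,∞)→ℂ with ‖z‖_λ ≤ 2M, the asymptotic characteristic Θ for z with ‖Θ(t,ϑ,ω) − ϑ − ωt‖_λ < ∞ exists, and the function w(t) := ∫_{[0,2π)×ℝ} e^{iΘ(t,ϑ,ω)} f_∞(ϑ,ω) dϑ dω again satisfies ‖w‖_λ ≤ 2M; that is, the iteration map z ↦ w preserves the ball of radius 2M in the ‖·‖_λ norm. -/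
open MeasureTheory

noncomputable section

/-- Weighted sup-norm `sup_{t ≥ 0} |z t| e^{l t}` for `z : ℝ → ℂ`. -/
def expNormZ (l : ℝ) (z : ℝ → ℂ) : ℝ :=
  ⨆ t : {t : ℝ // 0 ≤ t}, ‖z t.1‖ * Real.exp (l * t.1)

/-- Finiteness of the weighted sup-norm for `z : ℝ → ℂ`. -/
def ExpBddZ (l : ℝ) (z : ℝ → ℂ) : Prop :=
  BddAbove (Set.range fun t : {t : ℝ // 0 ≤ t} => ‖z t.1‖ * Real.exp (l * t.1))

/-- Weighted sup-norm `sup_{t ≥ 0, ϑ, ω} |h t ϑ ω| e^{l t}`. -/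
def expNormH (l : ℝ) (h : ℝ → ℝ → ℝ → ℂ) : ℝ :=
  ⨆ p : {t : ℝ // 0 ≤ t} × ℝ × ℝ, ‖h p.1.1 p.2.1 p.2.2‖ * Real.exp (l * p.1.1)

/-- Finiteness of the weighted sup-norm for `h`. -/
def ExpBddH (l : ℝ) (h : ℝ → ℝ → ℝ → ℂ) : Prop :=
  BddAbove (Set.range fun p : {t : ℝ // 0 ≤ t} × ℝ × ℝ =>
    ‖h p.1.1 p.2.1 p.2.2‖ * Real.exp (l * p.1.1))

/-- `Θ` is an asymptotic characteristic for the order parameter `z`, with coupling `μ`: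
`Θ(t,ϑ,ω) = ϑ + ωt + μ ∫_t^∞ Im(e^{iΘ(s,ϑ,ω)} conj(z s)) ds` for all `t ≥ 0`. -/
def IsAsymChar (μ : ℝ) (z : ℝ → ℂ) (Θ : ℝ → ℝ → ℝ → ℝ) : Prop :=
  ∀ t : ℝ, 0 ≤ t → ∀ ϑ ω : ℝ,
    Θ t ϑ ω = ϑ + ω * t + μ * ∫ s in Set.Ioi t,
      (Complex.exp (Complex.I * (Θ s ϑ ω : ℂ)) * (starRingEnd ℂ) (z s)).im

/-- The reference measure on the cylinder `[0, 2π) × ℝ`. -/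
def cylMeasure : Measure (ℝ × ℝ) :=
  (volume.restrict (Set.Ico 0 (2 * Real.pi))).prod volume

/-- `f` is a probability density on the cylinder: nonnegative, `2π`-periodic in the
first variable, with total integral one over `[0, 2π) × ℝ`. -/
structure IsCylDensity (f : ℝ → ℝ → ℝ) : Prop where
  nonneg : ∀ ϑ ω : ℝ, 0 ≤ f ϑ ω
  periodic : ∀ ϑ ω : ℝ, f (ϑ + 2 * Real.pi) ω = f ϑ ω
  integrable : Integrable (fun p : ℝ × ℝ => f p.1 p.2) cylMeasure
  integral_one : (∫ p : ℝ × ℝ, f p.1 p.2 ∂cylMeasure) = 1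

/-- The Fourier transform `f̂(k,η) = ∫_{[0,2π)×ℝ} f(ϑ,ω) e^{-i(kϑ+ηω)} dϑ dω`. -/
def fHat (f : ℝ → ℝ → ℝ) (k : ℤ) (η : ℝ) : ℂ :=
  ∫ p : ℝ × ℝ, (f p.1 p.2 : ℂ) *
    Complex.exp (-Complex.I * (((k : ℝ) * p.1 + η * p.2 : ℝ) : ℂ)) ∂cylMeasure

/-- The order parameter `w(t) = ∫_{[0,2π)×ℝ} e^{iΘ(t,ϑ,ω)} f(ϑ,ω) dϑ dω`. -/
def orderParam (f : ℝ → ℝ → ℝ) (Θ : ℝ → ℝ → ℝ → ℝ) (t : ℝ) : ℂ :=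
  ∫ p : ℝ × ℝ, Complex.exp (Complex.I * (Θ t p.1 p.2 : ℂ)) * (f p.1 p.2 : ℂ) ∂cylMeasure


namespace KurAux
open Set BoundedContinuousFunction

lemma abs_exp_I_mul_sub_one_le (x : ℝ) :
    ‖Complex.exp (Complex.I * x) - 1‖ ≤ |x| := by
  have h : Complex.exp (Complex.I * x) - 1
      = ((Real.cos x - 1 : ℝ) : ℂ) + (Real.sin x : ℝ) * Complex.I := by
    rw [mul_comm, Complex.exp_mul_I]
    push_cast [Complex.cos_ofReal_re, Complex.sin_ofReal_re]
    ring_nf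
  rw [h, Complex.norm_add_mul_I]
  rw [show |x| = Real.sqrt (x ^ 2) from (Real.sqrt_sq_eq_abs x).symm]
  apply Real.sqrt_le_sqrt
  have h1 := Real.sin_sq_add_cos_sq x
  have h2 := Real.one_sub_sq_div_two_le_cos (x := x)
  nlinarith

lemma abs_exp_I_mul (x : ℝ) : ‖Complex.exp (Complex.I * x)‖ = 1 := by
  rw [Complex.norm_exp]; simp

lemma abs_exp_I_mul_sub (a b : ℝ) :
    ‖Complex.exp (Complex.I * a) - Complex.exp (Complex.I * b)‖ ≤ |a - b| := by
  have h : Complex.exp (Complex.I * a) - Complex.exp (Complex.I * b)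
      = Complex.exp (Complex.I * b) * (Complex.exp (Complex.I * ((a - b : ℝ) : ℂ)) - 1) := by
    rw [mul_sub, ← Complex.exp_add, mul_one]
    push_cast
    ring_nf
  rw [h, norm_mul, abs_exp_I_mul, one_mul]
  exact abs_exp_I_mul_sub_one_le _

lemma integral_exp_neg_mul_Ioi {c : ℝ} (hc : 0 < c) (a : ℝ) :
    ∫ s in Ioi a, Real.exp (-(c * s)) = Real.exp (-(c * a)) / c := by
  have h := integral_comp_mul_left_Ioi (fun x => Real.exp (-x)) a hc
  simp only [smul_eq_mul] at h
  rw [h, integral_exp_neg_Ioi, inv_mul_eq_div]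

lemma integrableOn_exp_neg_mul {c : ℝ} (hc : 0 < c) (a : ℝ) :
    IntegrableOn (fun s : ℝ => Real.exp (-(c * s))) (Ioi a) := by
  simpa [neg_mul] using exp_neg_integrableOn_Ioi a hc

/-- truncation of z to [0,∞) -/
def ztr (z : ℝ → ℂ) (s : ℝ) : ℂ := if 0 ≤ s then z s else 0

/-- the pointwise kernel -/
def kernP (l : ℝ) (z : ℝ → ℂ) (p : ℝ × ℝ) (s d : ℝ) : ℝ :=
  (Complex.exp (Complex.I * ((p.1 + p.2 * s + Real.exp (-(l * s)) * d : ℝ) : ℂ)) *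
    (starRingEnd ℂ) (ztr z s)).im

/-- the Picard map, as a bare function -/
def Tfun (l μ : ℝ) (z : ℝ → ℂ) (p : ℝ × ℝ) (D : ℝ → ℝ) (t : ℝ) : ℝ :=
  Real.exp (l * max t 0) * (μ * ∫ s in Ioi (max t 0), kernP l z p s (D s))

lemma ztr_meas {z : ℝ → ℂ} (hz : Measurable z) : Measurable (ztr z) :=
  Measurable.ite measurableSet_Ici hz measurable_const

lemma abs_kernP_le (l : ℝ) (z : ℝ → ℂ) (p : ℝ × ℝ) (s d : ℝ) :
    |kernP l z p s d| ≤ ‖ztr z s‖ := by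
  refine (Complex.abs_im_le_norm _).trans ?_
  rw [norm_mul, abs_exp_I_mul, one_mul, Complex.norm_conj]

lemma abs_kernP_sub_le (l : ℝ) (z : ℝ → ℂ) (p : ℝ × ℝ) (s d₁ d₂ : ℝ) :
    |kernP l z p s d₁ - kernP l z p s d₂|
      ≤ Real.exp (-(l * s)) * |d₁ - d₂| * ‖ztr z s‖ := by
  have h : kernP l z p s d₁ - kernP l z p s d₂
      = ((Complex.exp (Complex.I * ((p.1 + p.2 * s + Real.exp (-(l * s)) * d₁ : ℝ) : ℂ))
        - Complex.exp (Complex.I * ((p.1 + p.2 * s + Real.exp (-(l * s)) * d₂ : ℝ) : ℂ)))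
        * (starRingEnd ℂ) (ztr z s)).im := by
    rw [sub_mul, Complex.sub_im]; rfl
  rw [h]
  refine (Complex.abs_im_le_norm _).trans ?_
  rw [norm_mul, Complex.norm_conj]
  gcongr
  refine (abs_exp_I_mul_sub _ _).trans_eq ?_
  rw [show p.1 + p.2 * s + Real.exp (-(l * s)) * d₁ - (p.1 + p.2 * s + Real.exp (-(l * s)) * d₂)
      = Real.exp (-(l * s)) * (d₁ - d₂) by ring, abs_mul, abs_of_pos (Real.exp_pos _)]

lemma kernP_meas {l : ℝ} {z : ℝ → ℂ} {α : Type*} [MeasurableSpace α]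
    {P : α → ℝ × ℝ} {S Dm : α → ℝ}
    (hzm : Measurable z) (hP : Measurable P) (hS : Measurable S) (hDm : Measurable Dm) :
    Measurable fun a => kernP l z (P a) (S a) (Dm a) := by
  unfold kernP
  apply Complex.measurable_im.comp
  apply Measurable.mul
  · apply Complex.measurable_exp.comp
    apply Measurable.const_mul
    apply Complex.measurable_ofReal.comp
    exact ((hP.fst).add (hP.snd.mul hS)).add ((((hS.const_mul l).neg).exp).mul hDm)
  · exact Complex.continuous_conj.measurable.comp ((ztr_meas hzm).comp hS)

section Est
variable {l μ M : ℝ} {z : ℝ → ℂ}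
  (hl : 0 < l) (hM : 0 < M)
  (hzb : ∀ s, ‖ztr z s‖ ≤ 2 * M * Real.exp (-(l * s)))
  (hzm : Measurable z)

include hl hM hzb hzm in
lemma kern_integrableOn {D : ℝ → ℝ} (hD : Measurable D) (p : ℝ × ℝ) (a : ℝ) :
    IntegrableOn (fun s => kernP l z p s (D s)) (Ioi a) := by
  refine Integrable.mono' (((integrableOn_exp_neg_mul hl a).const_mul (2 * M))) ?_ ?_
  · exact (kernP_meas hzm measurable_const measurable_id hD).aestronglyMeasurable
  · filter_upwards with s
    calc |kernP l z p s (D s)| ≤ ‖ztr z s‖ := abs_kernP_le _ _ _ _ _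
    _ ≤ 2 * M * Real.exp (-(l * s)) := hzb s

include hl hM hzb hzm in
lemma int_kern_bound {D : ℝ → ℝ} (hD : Measurable D) (p : ℝ × ℝ) (a : ℝ) :
    |∫ s in Ioi a, kernP l z p s (D s)| ≤ 2 * M * Real.exp (-(l * a)) / l := by
  have h1 : |∫ s in Ioi a, kernP l z p s (D s)|
      ≤ ∫ s in Ioi a, 2 * M * Real.exp (-(l * s)) := by
    rw [← Real.norm_eq_abs]
    refine norm_integral_le_of_norm_le ((integrableOn_exp_neg_mul hl a).const_mul (2 * M)) ?_
    filter_upwards with s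
    rw [Real.norm_eq_abs]
    exact (abs_kernP_le _ _ _ _ _).trans (hzb s)
  rw [integral_const_mul, integral_exp_neg_mul_Ioi hl] at h1
  calc |∫ s in Ioi a, kernP l z p s (D s)| ≤ 2 * M * (Real.exp (-(l * a)) / l) := h1
  _ = 2 * M * Real.exp (-(l * a)) / l := by ring

include hl hM hzb hzm in
lemma int_kern_sub_bound {D₁ D₂ : ℝ → ℝ} (hD₁ : Measurable D₁) (hD₂ : Measurable D₂)
    {d : ℝ} (hd0 : 0 ≤ d) (hd : ∀ s, |D₁ s - D₂ s| ≤ d) (p : ℝ × ℝ) (a : ℝ) :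
    |(∫ s in Ioi a, kernP l z p s (D₁ s)) - ∫ s in Ioi a, kernP l z p s (D₂ s)|
      ≤ M * d * Real.exp (-(2 * l * a)) / l := by
  have h2l : (0:ℝ) < 2 * l := by linarith
  rw [← integral_sub (kern_integrableOn hl hM hzb hzm hD₁ p a)
    (kern_integrableOn hl hM hzb hzm hD₂ p a)]
  have h1 : |∫ s in Ioi a, (kernP l z p s (D₁ s) - kernP l z p s (D₂ s))|
      ≤ ∫ s in Ioi a, 2 * M * d * Real.exp (-(2 * l * s)) := by
    rw [← Real.norm_eq_abs]
    refine norm_integral_le_of_norm_le ((integrableOn_exp_neg_mul h2l a).const_mul (2 * M * d)) ?_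
    filter_upwards with s
    rw [Real.norm_eq_abs]
    calc |kernP l z p s (D₁ s) - kernP l z p s (D₂ s)|
        ≤ Real.exp (-(l * s)) * |D₁ s - D₂ s| * ‖ztr z s‖ :=
          abs_kernP_sub_le _ _ _ _ _ _
      _ ≤ Real.exp (-(l * s)) * d * (2 * M * Real.exp (-(l * s))) := by
          gcongr <;> first | positivity | exact hd s | exact hzb s
      _ = 2 * M * d * Real.exp (-(2 * l * s)) := by
          rw [show -(2 * l * s) = -(l * s) + -(l * s) by ring, Real.exp_add]; ring
  rw [integral_const_mul, integral_exp_neg_mul_Ioi h2l] at h1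
  calc |∫ s in Ioi a, (kernP l z p s (D₁ s) - kernP l z p s (D₂ s))|
      ≤ 2 * M * d * (Real.exp (-(2 * l * a)) / (2 * l)) := h1
    _ = M * d * Real.exp (-(2 * l * a)) / l := by field_simp

include hl hM hzb hzm in
lemma Tfun_continuous {D : ℝ → ℝ} (hD : Measurable D) (p : ℝ × ℝ) :
    Continuous (Tfun l μ z p D) := by
  have hii : ∀ a b : ℝ, IntervalIntegrable (fun s => kernP l z p s (D s)) volume a b := by
    intro a b
    constructor
    · exact (kern_integrableOn hl hM hzb hzm hD p a).mono_set Ioc_subset_Ioi_self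
    · exact (kern_integrableOn hl hM hzb hzm hD p b).mono_set Ioc_subset_Ioi_self
  have hsplit : ∀ t : ℝ, (∫ s in Ioi (max t 0), kernP l z p s (D s))
      = (∫ s in Ioi (0:ℝ), kernP l z p s (D s))
        - ∫ s in (0:ℝ)..(max t 0), kernP l z p s (D s) := by
    intro t
    have h0 : (0:ℝ) ≤ max t 0 := le_max_right _ _
    rw [intervalIntegral.integral_of_le h0]
    have hu : Ioc (0:ℝ) (max t 0) ∪ Ioi (max t 0) = Ioi 0 := Ioc_union_Ioi_eq_Ioi h0
    have hdisj : Disjoint (Ioc (0:ℝ) (max t 0)) (Ioi (max t 0)) := by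
      refine Set.disjoint_left.2 fun x hx hx' => ?_
      exact absurd hx.2 (not_le.2 hx')
    rw [← hu, setIntegral_union hdisj measurableSet_Ioi
      ((kern_integrableOn hl hM hzb hzm hD p 0).mono_set Ioc_subset_Ioi_self)
      (kern_integrableOn hl hM hzb hzm hD p (max t 0))]
    ring
  unfold Tfun
  refine Continuous.mul ?_ (Continuous.mul continuous_const ?_)
  · exact Real.continuous_exp.comp (continuous_const.mul (continuous_id.max continuous_const))
  · have heq : (fun t : ℝ => ∫ s in Ioi (max t 0), kernP l z p s (D s))
        = fun t => (∫ s in Ioi (0:ℝ), kernP l z p s (D s))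
          - ∫ s in (0:ℝ)..(max t 0), kernP l z p s (D s) := funext hsplit
    rw [heq]
    exact continuous_const.sub ((intervalIntegral.continuous_primitive hii 0).comp
      (continuous_id.max continuous_const))

include hl hM hzb hzm in
lemma Tfun_bound (hμ : 0 ≤ μ) {D : ℝ → ℝ} (hD : Measurable D) (p : ℝ × ℝ) (t : ℝ) :
    |Tfun l μ z p D t| ≤ 2 * μ * M / l := by
  unfold Tfun
  rw [abs_mul, abs_mul, abs_of_pos (Real.exp_pos _), abs_of_nonneg hμ]
  calc Real.exp (l * max t 0) * (μ * |∫ s in Ioi (max t 0), kernP l z p s (D s)|)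
      ≤ Real.exp (l * max t 0) * (μ * (2 * M * Real.exp (-(l * max t 0)) / l)) := by
        gcongr
        exact int_kern_bound hl hM hzb hzm hD p (max t 0)
    _ = 2 * μ * M / l * (Real.exp (l * max t 0) * Real.exp (-(l * max t 0))) := by ring
    _ = 2 * μ * M / l := by rw [← Real.exp_add, add_neg_cancel, Real.exp_zero, mul_one]

include hl hM hzb hzm in
lemma exists_char (hμ : 0 < μ) (hμl : 2 * μ ≤ l) (hqM : μ * M < l) :
    ∃ Θ : ℝ → ℝ → ℝ → ℝ,
      (∀ t ϑ ω : ℝ, 0 ≤ t → |Θ t ϑ ω - ϑ - ω * t| * Real.exp (l * t) ≤ M) ∧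
      IsAsymChar μ z Θ ∧
      (∀ t : ℝ, Measurable fun p : ℝ × ℝ => Θ t p.1 p.2) := by
  have hμ0 : (0:ℝ) ≤ μ := hμ.le
  let TT : ℝ × ℝ → (ℝ →ᵇ ℝ) → (ℝ →ᵇ ℝ) := fun p D =>
    BoundedContinuousFunction.ofNormedAddCommGroup (Tfun l μ z p D)
      (Tfun_continuous hl hM hzb hzm D.continuous.measurable p) (2 * μ * M / l)
      (fun t => by
        rw [Real.norm_eq_abs]
        exact Tfun_bound hl hM hzb hzm hμ0 D.continuous.measurable p t)
  have hTT : ∀ p D t, TT p D t = Tfun l μ z p D t := fun _ _ _ => rfl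
  have hq0 : (0:ℝ) ≤ μ * M / l := by positivity
  set q : NNReal := ⟨μ * M / l, hq0⟩ with hqdef
  have hqc : (q : ℝ) = μ * M / l := rfl
  have hq1 : q < 1 := by
    rw [← NNReal.coe_lt_coe, hqc, NNReal.coe_one]
    exact (div_lt_one hl).2 hqM
  have hcontr : ∀ p, ContractingWith q (TT p) := by
    intro p
    refine ⟨hq1, LipschitzWith.of_dist_le_mul fun D₁ D₂ => ?_⟩
    refine (BoundedContinuousFunction.dist_le (by positivity)).2 fun t => ?_
    have hd : ∀ s, |D₁ s - D₂ s| ≤ dist D₁ D₂ := fun s => by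
      have h := BoundedContinuousFunction.dist_coe_le_dist (f := D₁) (g := D₂) s
      rwa [Real.dist_eq] at h
    have hsub := int_kern_sub_bound hl hM hzb hzm D₁.continuous.measurable
      D₂.continuous.measurable dist_nonneg hd p (max t 0)
    rw [Real.dist_eq, hTT, hTT]
    have heq : Tfun l μ z p D₁ t - Tfun l μ z p D₂ t
        = Real.exp (l * max t 0) * μ *
          ((∫ s in Ioi (max t 0), kernP l z p s (D₁ s))
            - ∫ s in Ioi (max t 0), kernP l z p s (D₂ s)) := by
      unfold Tfun; ring
    rw [heq, abs_mul, abs_of_nonneg (by positivity : (0:ℝ) ≤ Real.exp (l * max t 0) * μ)]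
    have hexp : Real.exp (l * max t 0) * Real.exp (-(2 * l * max t 0)) ≤ 1 := by
      rw [← Real.exp_add]
      have h0 : (0:ℝ) ≤ max t 0 := le_max_right _ _
      have : l * max t 0 + -(2 * l * max t 0) ≤ 0 := by nlinarith
      calc Real.exp (l * max t 0 + -(2 * l * max t 0)) ≤ Real.exp 0 := Real.exp_le_exp.2 this
        _ = 1 := Real.exp_zero
    calc Real.exp (l * max t 0) * μ *
          |(∫ s in Ioi (max t 0), kernP l z p s (D₁ s))
            - ∫ s in Ioi (max t 0), kernP l z p s (D₂ s)|
        ≤ Real.exp (l * max t 0) * μ * (M * dist D₁ D₂ * Real.exp (-(2 * l * max t 0)) / l) := by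
          gcongr
      _ = μ * M / l * dist D₁ D₂ * (Real.exp (l * max t 0) * Real.exp (-(2 * l * max t 0))) := by
          ring
      _ ≤ μ * M / l * dist D₁ D₂ * 1 := by
          have : (0:ℝ) ≤ μ * M / l * dist D₁ D₂ := by positivity
          exact mul_le_mul_of_nonneg_left hexp this
      _ = (q : ℝ) * dist D₁ D₂ := by rw [hqc]; ring
  haveI : Nonempty (ℝ →ᵇ ℝ) := ⟨0⟩
  let Dfix : ℝ × ℝ → (ℝ →ᵇ ℝ) := fun p => ContractingWith.fixedPoint (TT p) (hcontr p)
  have hfix : ∀ p, TT p (Dfix p) = Dfix p := fun p => (hcontr p).fixedPoint_isFixedPt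
  have hfixT : ∀ p t, Dfix p t = Tfun l μ z p (Dfix p) t := by
    intro p t
    conv_lhs => rw [← hfix p]
    exact hTT p (Dfix p) t
  have hDM : ∀ p t, |Dfix p t| ≤ M := by
    intro p t
    rw [hfixT p t]
    refine (Tfun_bound hl hM hzb hzm hμ0 (Dfix p).continuous.measurable p t).trans ?_
    rw [div_le_iff₀ hl]
    nlinarith
  refine ⟨fun t ϑ ω => ϑ + ω * t + Real.exp (-(l * t)) * Dfix (ϑ, ω) t, ?_, ?_, ?_⟩
  · intro t ϑ ω ht
    dsimp only
    have h1 : ϑ + ω * t + Real.exp (-(l * t)) * Dfix (ϑ, ω) t - ϑ - ω * t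
        = Real.exp (-(l * t)) * Dfix (ϑ, ω) t := by ring
    rw [h1, abs_mul, abs_of_pos (Real.exp_pos _)]
    have hc : Real.exp (-(l * t)) * Real.exp (l * t) = 1 := by
      rw [← Real.exp_add, neg_add_cancel, Real.exp_zero]
    calc Real.exp (-(l * t)) * |Dfix (ϑ, ω) t| * Real.exp (l * t)
        = |Dfix (ϑ, ω) t| * (Real.exp (-(l * t)) * Real.exp (l * t)) := by ring
      _ = |Dfix (ϑ, ω) t| := by rw [hc, mul_one]
      _ ≤ M := hDM _ _
  · intro t ht ϑ ω
    dsimp only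
    have hc : Real.exp (-(l * t)) * Real.exp (l * t) = 1 := by
      rw [← Real.exp_add, neg_add_cancel, Real.exp_zero]
    have h2 : Real.exp (-(l * t)) * Dfix (ϑ, ω) t
        = μ * ∫ s in Ioi t, kernP l z (ϑ, ω) s (Dfix (ϑ, ω) s) := by
      rw [hfixT (ϑ, ω) t]
      unfold Tfun
      rw [max_eq_left ht]
      calc Real.exp (-(l * t)) * (Real.exp (l * t) *
            (μ * ∫ s in Ioi t, kernP l z (ϑ, ω) s (Dfix (ϑ, ω) s)))
          = (Real.exp (-(l * t)) * Real.exp (l * t)) *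
            (μ * ∫ s in Ioi t, kernP l z (ϑ, ω) s (Dfix (ϑ, ω) s)) := by ring
        _ = μ * ∫ s in Ioi t, kernP l z (ϑ, ω) s (Dfix (ϑ, ω) s) := by rw [hc, one_mul]
    have h3 : (∫ s in Ioi t, kernP l z (ϑ, ω) s (Dfix (ϑ, ω) s))
        = ∫ s in Ioi t, (Complex.exp (Complex.I *
            ((ϑ + ω * s + Real.exp (-(l * s)) * Dfix (ϑ, ω) s : ℝ) : ℂ)) *
            (starRingEnd ℂ) (z s)).im := by
      refine setIntegral_congr_fun measurableSet_Ioi fun s hs => ?_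
      have hs0 : (0:ℝ) ≤ s := ht.trans (le_of_lt hs)
      unfold kernP ztr
      rw [if_pos hs0]
    rw [h2, h3]
  · intro t
    have hiter : ∀ n : ℕ, Measurable fun x : (ℝ × ℝ) × ℝ =>
        ((TT x.1)^[n] 0 : ℝ →ᵇ ℝ) x.2 := by
      intro n
      induction n with
      | zero => simpa using measurable_const
      | succ n ih =>
        have heq : (fun x : (ℝ × ℝ) × ℝ => ((TT x.1)^[n+1] 0 : ℝ →ᵇ ℝ) x.2)
            = fun x => Real.exp (l * max x.2 0) *
                (μ * ∫ s : ℝ, (Ioi (max x.2 0)).indicator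
                  (fun s' => kernP l z x.1 s' (((TT x.1)^[n] 0 : ℝ →ᵇ ℝ) s')) s) := by
          funext x
          rw [Function.iterate_succ_apply', hTT]
          unfold Tfun
          rw [integral_indicator measurableSet_Ioi]
        rw [heq]
        apply Measurable.mul
        · exact (Real.continuous_exp.comp
            (continuous_const.mul (continuous_snd.max continuous_const))).measurable
        · apply Measurable.const_mul
          have hG : Measurable fun y : ((ℝ × ℝ) × ℝ) × ℝ =>
              (Ioi (max y.1.2 0)).indicator
                (fun s' => kernP l z y.1.1 s' (((TT y.1.1)^[n] 0 : ℝ →ᵇ ℝ) s')) y.2 := by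
            have hite : (fun y : ((ℝ × ℝ) × ℝ) × ℝ =>
                (Ioi (max y.1.2 0)).indicator
                  (fun s' => kernP l z y.1.1 s' (((TT y.1.1)^[n] 0 : ℝ →ᵇ ℝ) s')) y.2)
                = fun y => if max y.1.2 0 < y.2
                    then kernP l z y.1.1 y.2 (((TT y.1.1)^[n] 0 : ℝ →ᵇ ℝ) y.2) else 0 := by
              funext y
              rw [Set.indicator_apply]
              simp [mem_Ioi]
            rw [hite]
            refine Measurable.ite ?_ ?_ measurable_const
            · exact measurableSet_lt ((measurable_fst.snd).max measurable_const) measurable_snd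
            · exact kernP_meas hzm (measurable_fst.fst) measurable_snd
                (ih.comp ((measurable_fst.fst).prodMk measurable_snd))
          exact hG.stronglyMeasurable.integral_prod_right'.measurable
    have hlim : ∀ p : ℝ × ℝ, Filter.Tendsto (fun n => ((TT p)^[n] 0 : ℝ →ᵇ ℝ) t)
        Filter.atTop (nhds (Dfix p t)) := by
      intro p
      exact ((continuous_eval_const t).tendsto _).comp
        ((hcontr p).tendsto_iterate_fixedPoint 0)
    have hDmeas : Measurable fun p : ℝ × ℝ => Dfix p t :=
      measurable_of_tendsto_metrizable
        (fun n => (hiter n).comp (measurable_id.prodMk measurable_const))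
        (tendsto_pi_nhds.2 hlim)
    exact (measurable_fst.add (measurable_snd.mul measurable_const)).add
      (hDmeas.const_mul _)


end Est


end KurAux

/-- The iteration map `z ↦ w` preserves the ball of radius `2M` in the `‖·‖_λ` norm. -/
theorem iteration_preserves_ball_exp
    (l μ : ℝ) (hl : 0 < l) (hμ : 0 < μ)
    (f : ℝ → ℝ → ℝ) (hf : IsCylDensity f)
    (M : ℝ) (hM : ∀ (k : ℤ) (η : ℝ),
      ‖fHat f k η‖ * Real.exp (l * (|(k : ℝ)| + |η|)) ≤ M)
    (hμl : 2 * μ ≤ l) (hμM : 2 * μ * M < l) :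
    ∀ z : ℝ → ℂ, Measurable z → ExpBddZ l z → expNormZ l z ≤ 2 * M →
      ∃ Θ : ℝ → ℝ → ℝ → ℝ,
        ExpBddH l (fun t ϑ ω => ((Θ t ϑ ω - ϑ - ω * t : ℝ) : ℂ)) ∧
        IsAsymChar μ z Θ ∧
        expNormZ l (orderParam f Θ) ≤ 2 * M := by
  intro z hzm hzbdd hznorm
  haveI : Nonempty {t : ℝ // 0 ≤ t} := ⟨⟨0, le_rfl⟩⟩
  -- `M ≥ 1`
  have hf00 : fHat f 0 0 = 1 := by
    unfold fHat
    simp only [Int.cast_zero, zero_mul, add_zero, Complex.ofReal_zero, mul_zero,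
      Complex.exp_zero, mul_one]
    calc (∫ p : ℝ × ℝ, (f p.1 p.2 : ℂ) ∂cylMeasure)
        = ((∫ p : ℝ × ℝ, f p.1 p.2 ∂cylMeasure : ℝ) : ℂ) := integral_ofReal
      _ = 1 := by rw [hf.integral_one, Complex.ofReal_one]
  have hM1 : (1:ℝ) ≤ M := by
    have h := hM 0 0
    rw [hf00] at h
    simpa using h
  have hM0 : (0:ℝ) < M := lt_of_lt_of_le one_pos hM1
  -- pointwise bound on the truncated z
  have hzb : ∀ s, ‖KurAux.ztr z s‖ ≤ 2 * M * Real.exp (-(l * s)) := by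
    intro s
    unfold KurAux.ztr
    split_ifs with hs
    · have h1 : ‖z s‖ * Real.exp (l * s) ≤ expNormZ l z :=
        le_ciSup hzbdd ⟨s, hs⟩
      have h2 : ‖z s‖ * Real.exp (l * s) ≤ 2 * M := h1.trans hznorm
      have he : (0:ℝ) < Real.exp (l * s) := Real.exp_pos _
      rw [Real.exp_neg]
      calc ‖z s‖
          = ‖z s‖ * Real.exp (l * s) * (Real.exp (l * s))⁻¹ := by field_simp
        _ ≤ 2 * M * (Real.exp (l * s))⁻¹ := by gcongr
    · simp only [norm_zero]
      positivity
  have hqMlt : μ * M < l := by nlinarith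
  obtain ⟨Θ, hΘb, hΘchar, hΘmeas⟩ := KurAux.exists_char hl hM0 hzb hzm hμ hμl hqMlt
  refine ⟨Θ, ?_, hΘchar, ?_⟩
  · -- ExpBddH
    refine ⟨M, ?_⟩
    rintro x ⟨⟨⟨t, ht⟩, ϑ, ω⟩, rfl⟩
    dsimp only
    rw [Complex.norm_real, Real.norm_eq_abs]
    exact hΘb t ϑ ω ht
  · -- the norm bound for the order parameter
    have hfint := hf.integrable
    have hfaem : AEStronglyMeasurable (fun p : ℝ × ℝ => (f p.1 p.2 : ℂ)) cylMeasure :=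
      Complex.continuous_ofReal.comp_aestronglyMeasurable hfint.aestronglyMeasurable
    apply ciSup_le
    rintro ⟨t, ht⟩
    dsimp only
    set g1 : ℝ × ℝ → ℂ :=
      fun p => Complex.exp (Complex.I * ((p.1 + p.2 * t : ℝ) : ℂ)) * (f p.1 p.2 : ℂ) with hg1
    set g2 : ℝ × ℝ → ℂ :=
      fun p => (Complex.exp (Complex.I * ((Θ t p.1 p.2 : ℝ) : ℂ))
        - Complex.exp (Complex.I * ((p.1 + p.2 * t : ℝ) : ℂ))) * (f p.1 p.2 : ℂ) with hg2
    have hcont1 : Continuous fun p : ℝ × ℝ => Complex.exp (Complex.I * ((p.1 + p.2 * t : ℝ) : ℂ)) :=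
      Complex.continuous_exp.comp (continuous_const.mul (Complex.continuous_ofReal.comp
        (continuous_fst.add (continuous_snd.mul continuous_const))))
    have hg1m : AEStronglyMeasurable g1 cylMeasure :=
      hcont1.aestronglyMeasurable.mul hfaem
    have hg2m : AEStronglyMeasurable g2 cylMeasure := by
      refine AEStronglyMeasurable.mul ?_ hfaem
      refine AEStronglyMeasurable.sub ?_ hcont1.aestronglyMeasurable
      exact (Complex.measurable_exp.comp
        ((Complex.measurable_ofReal.comp (hΘmeas t)).const_mul Complex.I)).aestronglyMeasurable
    have hg1i : Integrable g1 cylMeasure := by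
      refine hfint.mono' hg1m ?_
      filter_upwards with p
      rw [hg1, norm_mul, KurAux.abs_exp_I_mul, one_mul,
        Complex.norm_real, Real.norm_eq_abs, abs_of_nonneg (hf.nonneg _ _)]
    have hg2i : Integrable g2 cylMeasure := by
      refine (hfint.const_mul 2).mono' hg2m ?_
      filter_upwards with p
      rw [hg2, norm_mul, Complex.norm_real, Real.norm_eq_abs,
        abs_of_nonneg (hf.nonneg _ _)]
      have htri : ‖Complex.exp (Complex.I * ((Θ t p.1 p.2 : ℝ) : ℂ))
          - Complex.exp (Complex.I * ((p.1 + p.2 * t : ℝ) : ℂ))‖ ≤ 2 := by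
        refine (norm_sub_le _ _).trans ?_
        rw [KurAux.abs_exp_I_mul,
          KurAux.abs_exp_I_mul]
        norm_num
      exact mul_le_mul_of_nonneg_right htri (hf.nonneg _ _)
    have hw : orderParam f Θ t = (∫ p, g1 p ∂cylMeasure) + ∫ p, g2 p ∂cylMeasure := by
      unfold orderParam
      rw [← integral_add hg1i hg2i]
      refine integral_congr_ae (Filter.Eventually.of_forall fun p => ?_)
      rw [hg1, hg2]
      ring
    have hI1 : (∫ p, g1 p ∂cylMeasure) = fHat f (-1) (-t) := by
      unfold fHat
      refine integral_congr_ae (Filter.Eventually.of_forall fun p => ?_)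
      rw [hg1]
      dsimp only
      rw [mul_comm]
      congr 1
      rw [show ((((-1:ℤ):ℝ) * p.1 + (-t) * p.2 : ℝ) : ℂ)
          = -((p.1 + p.2 * t : ℝ) : ℂ) by push_cast; ring]
      ring_nf
    have hb1 : ‖fHat f (-1) (-t)‖ ≤ M * Real.exp (-(l * (1 + t))) := by
      have h := hM (-1) (-t)
      rw [show |((-1:ℤ):ℝ)| = (1:ℝ) by norm_num, abs_neg, abs_of_nonneg ht] at h
      have he : (0:ℝ) < Real.exp (l * (1 + t)) := Real.exp_pos _
      rw [Real.exp_neg]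
      calc ‖fHat f (-1) (-t)‖
          = ‖fHat f (-1) (-t)‖ * Real.exp (l * (1 + t))
            * (Real.exp (l * (1 + t)))⁻¹ := by field_simp
        _ ≤ M * (Real.exp (l * (1 + t)))⁻¹ := by gcongr
    have hb2 : ‖∫ p, g2 p ∂cylMeasure‖ ≤ M * Real.exp (-(l * t)) := by
      have hgle : ∀ p : ℝ × ℝ, ‖g2 p‖ ≤ M * Real.exp (-(l * t)) * f p.1 p.2 := by
        intro p
        rw [hg2, norm_mul, Complex.norm_real, Real.norm_eq_abs,
          abs_of_nonneg (hf.nonneg _ _)]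
        have hd : |Θ t p.1 p.2 - (p.1 + p.2 * t)| ≤ M * Real.exp (-(l * t)) := by
          have h := hΘb t p.1 p.2 ht
          rw [← sub_sub]
          have he : (0:ℝ) < Real.exp (l * t) := Real.exp_pos _
          rw [Real.exp_neg]
          calc |Θ t p.1 p.2 - p.1 - p.2 * t|
              = |Θ t p.1 p.2 - p.1 - p.2 * t| * Real.exp (l * t)
                * (Real.exp (l * t))⁻¹ := by field_simp
            _ ≤ M * (Real.exp (l * t))⁻¹ := by gcongr
        have habs := KurAux.abs_exp_I_mul_sub (Θ t p.1 p.2) (p.1 + p.2 * t)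
        exact mul_le_mul_of_nonneg_right (habs.trans hd) (hf.nonneg _ _)
      refine (norm_integral_le_of_norm_le
        (hfint.const_mul (M * Real.exp (-(l * t))))
        (Filter.Eventually.of_forall hgle)).trans ?_
      rw [integral_const_mul, hf.integral_one, mul_one]
    have hexp1 : Real.exp (-(l * (1 + t))) * Real.exp (l * t) = Real.exp (-l) := by
      rw [← Real.exp_add]
      congr 1
      ring
    have hexp2 : Real.exp (-(l * t)) * Real.exp (l * t) = 1 := by
      rw [← Real.exp_add, neg_add_cancel, Real.exp_zero]
    have hel : Real.exp (-l) ≤ 1 := by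
      calc Real.exp (-l) ≤ Real.exp 0 := Real.exp_le_exp.2 (by linarith)
        _ = 1 := Real.exp_zero
    rw [hw, hI1]
    calc ‖fHat f (-1) (-t) + ∫ p, g2 p ∂cylMeasure‖ * Real.exp (l * t)
        ≤ (‖fHat f (-1) (-t)‖ + ‖∫ p, g2 p ∂cylMeasure‖)
          * Real.exp (l * t) := by
          exact mul_le_mul_of_nonneg_right (norm_add_le _ _) (Real.exp_pos _).le
      _ ≤ (M * Real.exp (-(l * (1 + t))) + M * Real.exp (-(l * t))) * Real.exp (l * t) := by
          exact mul_le_mul_of_nonneg_right (add_le_add hb1 hb2) (Real.exp_pos _).le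
      _ = M * Real.exp (-l) + M := by
          rw [add_mul, mul_assoc, mul_assoc, hexp1, hexp2, mul_one]
      _ ≤ 2 * M := by nlinarith
end
end

section
/- Let λ>0, μ>0, let z:[0,∞)→ℂ be measurable with ‖z‖_λ < ∞, and let Θ:[0,∞)×ℝ×ℝ→ℝ satisfy ‖Θ(t,ϑ,ω) − ϑ − ωt‖_λ < ∞. Let f_∞:ℝ×ℝ→[0,∞) be bounded and continuously differentiable with bounded gradient. Define g(t,ϑ,ω) := f_∞(ϑ,ω) exp(−μ ∫_t^∞ Re(e^{iΘ(s,ϑ,ω)} · conj(z(s))) ds). Then there exists a constant C>0 such that for all t≥0: sup_{ϑ,ω} |g(t,ϑ,ω) − f_∞(Θ(t,ϑ,ω) − ωt, ω)| ≤ C e^{−λt}. -/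
open MeasureTheory

noncomputable section

lemma my_abs_exp_sub_one_le (x : ℝ) : |Real.exp x - 1| ≤ |x| * Real.exp |x| := by
  rcases le_or_gt 0 x with h | h
  · rw [abs_of_nonneg h,
      abs_of_nonneg (by linarith [Real.one_le_exp h] : (0:ℝ) ≤ Real.exp x - 1)]
    have h1 := Real.add_one_le_exp (-x)
    rw [Real.exp_neg] at h1
    have h2 := Real.exp_pos x
    nlinarith [mul_le_mul_of_nonneg_right h1 h2.le, inv_mul_cancel₀ h2.ne']
  · rw [abs_of_neg h,
      abs_of_nonpos (by nlinarith [Real.exp_lt_one_iff.mpr h] : Real.exp x - 1 ≤ 0)]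
    have h1 := Real.add_one_le_exp x
    have h2 := Real.one_le_exp (by linarith : (0:ℝ) ≤ -x)
    nlinarith

lemma my_integral_exp_decay (l t : ℝ) (hl : 0 < l) :
    ∫ s in Set.Ioi t, Real.exp (-l * s) = Real.exp (-l * t) / l := by
  have hderiv : ∀ x ∈ Set.Ici t,
      HasDerivAt (fun s => -Real.exp (-l * s) / l) (Real.exp (-l * x)) x := by
    intro x _
    have h1 : HasDerivAt (fun s : ℝ => -l * s) (-l) x := by
      simpa using (hasDerivAt_id x).const_mul (-l)
    have h2 : HasDerivAt (fun s => Real.exp (-l * s)) (Real.exp (-l * x) * (-l)) x :=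
      (Real.hasDerivAt_exp _).comp x h1
    have := (h2.neg).div_const l
    exact this.congr_deriv (by rw [mul_neg, neg_neg, mul_div_assoc, div_self hl.ne', mul_one])
  have hint := exp_neg_integrableOn_Ioi t hl
  have htend : Filter.Tendsto (fun s => -Real.exp (-l * s) / l) Filter.atTop (nhds 0) := by
    have h1 : Filter.Tendsto (fun s : ℝ => l * s) Filter.atTop Filter.atTop :=
      Filter.Tendsto.const_mul_atTop hl Filter.tendsto_id
    have h2 : Filter.Tendsto (fun s : ℝ => Real.exp (-(l * s))) Filter.atTop (nhds 0) :=
      Real.tendsto_exp_neg_atTop_nhds_zero.comp h1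
    have h3 : Filter.Tendsto (fun s : ℝ => -Real.exp (-(l * s)) / l) Filter.atTop
        (nhds (-0 / l)) := (h2.neg).div_const l
    simpa [neg_mul] using h3
  have := integral_Ioi_of_hasDerivAt_of_tendsto' hderiv hint htend
  rw [this]; ring

/-- The solution along characteristics stays exponentially close to the free flow
of the asymptotic state. -/
theorem solution_close_to_free_flow_exp
    (l μ : ℝ) (hl : 0 < l) (hμ : 0 < μ) (z : ℝ → ℂ) (hz : Measurable z)
    (hzb : ExpBddZ l z) (Θ : ℝ → ℝ → ℝ → ℝ)
    (hΘb : ExpBddH l (fun t ϑ ω => ((Θ t ϑ ω - ϑ - ω * t : ℝ) : ℂ)))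
    (f : ℝ → ℝ → ℝ) (hf0 : ∀ ϑ ω : ℝ, 0 ≤ f ϑ ω)
    (hfb : ∃ B : ℝ, ∀ ϑ ω : ℝ, f ϑ ω ≤ B)
    (hreg : ContDiff ℝ 1 (fun p : ℝ × ℝ => f p.1 p.2))
    (hgrad : ∃ K : ℝ, ∀ p : ℝ × ℝ, ‖fderiv ℝ (fun q : ℝ × ℝ => f q.1 q.2) p‖ ≤ K) :
    ∃ C > (0 : ℝ), ∀ t : ℝ, 0 ≤ t → ∀ ϑ ω : ℝ,
      |f ϑ ω * Real.exp (-μ * ∫ s in Set.Ioi t,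
          (Complex.exp (Complex.I * (Θ s ϑ ω : ℂ)) * (starRingEnd ℂ) (z s)).re)
        - f (Θ t ϑ ω - ω * t) ω| ≤ C * Real.exp (-l * t) := by
  obtain ⟨B, hB⟩ := hfb
  obtain ⟨K, hK⟩ := hgrad
  obtain ⟨Mz, hMz⟩ := hzb
  obtain ⟨MT, hMT⟩ := hΘb
  have hB0 : 0 ≤ B := le_trans (hf0 0 0) (hB 0 0)
  have hK0 : 0 ≤ K := le_trans (norm_nonneg _) (hK (0, 0))
  have hMz0 : 0 ≤ Mz := le_trans (mul_nonneg (norm_nonneg _) (Real.exp_pos _).le) (hMz ⟨⟨0, le_refl 0⟩, rfl⟩)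
  have hMT0 : 0 ≤ MT := le_trans (mul_nonneg (norm_nonneg _) (Real.exp_pos _).le) (hMT ⟨⟨⟨0, le_refl 0⟩, 0, 0⟩, rfl⟩)
  -- pointwise bounds
  have hzle : ∀ s : ℝ, 0 ≤ s → ‖z s‖ ≤ Mz * Real.exp (-l * s) := by
    intro s hs
    have h := hMz ⟨⟨s, hs⟩, rfl⟩
    simp only at h
    rw [neg_mul, Real.exp_neg, ← div_eq_mul_inv, le_div_iff₀ (Real.exp_pos _)]
    exact h
  have hTle : ∀ t : ℝ, 0 ≤ t → ∀ ϑ ω : ℝ,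
      |Θ t ϑ ω - ϑ - ω * t| ≤ MT * Real.exp (-l * t) := by
    intro t ht ϑ ω
    have h := hMT ⟨⟨⟨t, ht⟩, ϑ, ω⟩, rfl⟩
    simp only [Complex.norm_real, Real.norm_eq_abs] at h
    rw [neg_mul, Real.exp_neg, ← div_eq_mul_inv, le_div_iff₀ (Real.exp_pos _)]
    exact h
  -- Lipschitz bound for f
  have hlip : ∀ a b ω : ℝ, |f a ω - f b ω| ≤ K * |a - b| := by
    intro a b ω
    have hd : ∀ x ∈ (Set.univ : Set (ℝ × ℝ)),
        DifferentiableAt ℝ (fun q : ℝ × ℝ => f q.1 q.2) x :=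
      fun x _ => (hreg.differentiable one_ne_zero) x
    have := Convex.norm_image_sub_le_of_norm_fderiv_le hd
      (fun x _ => hK x) convex_univ (Set.mem_univ (b, ω)) (Set.mem_univ (a, ω))
    simp only [Real.norm_eq_abs] at this
    calc |f a ω - f b ω| ≤ K * ‖((a, ω) : ℝ × ℝ) - (b, ω)‖ := this
      _ = K * |a - b| := by
          rw [Prod.norm_def]
          simp [Real.norm_eq_abs]
  refine ⟨B * (μ * Mz / l * Real.exp (μ * Mz / l)) + K * MT + 1, ?_, ?_⟩
  · have h1 : 0 ≤ B * (μ * Mz / l * Real.exp (μ * Mz / l)) :=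
      mul_nonneg hB0 (mul_nonneg (div_nonneg (mul_nonneg hμ.le hMz0) hl.le)
        (Real.exp_pos _).le)
    have h2 : 0 ≤ K * MT := mul_nonneg hK0 hMT0
    linarith
  intro t ht ϑ ω
  set I := ∫ s in Set.Ioi t,
      (Complex.exp (Complex.I * (Θ s ϑ ω : ℂ)) * (starRingEnd ℂ) (z s)).re with hI
  -- bound on the integral
  have habsI : |I| ≤ Mz / l * Real.exp (-l * t) := by
    by_cases hint : IntegrableOn
        (fun s => (Complex.exp (Complex.I * (Θ s ϑ ω : ℂ)) * (starRingEnd ℂ) (z s)).re)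
        (Set.Ioi t) volume
    · have hbd : ∀ᵐ s ∂(volume.restrict (Set.Ioi t)),
          ‖(Complex.exp (Complex.I * (Θ s ϑ ω : ℂ)) * (starRingEnd ℂ) (z s)).re‖
            ≤ Mz * Real.exp (-l * s) := by
        filter_upwards [ae_restrict_mem measurableSet_Ioi] with s hs
        have hs0 : 0 ≤ s := le_trans ht (le_of_lt hs)
        calc ‖(Complex.exp (Complex.I * (Θ s ϑ ω : ℂ)) * (starRingEnd ℂ) (z s)).re‖
            ≤ ‖Complex.exp (Complex.I * (Θ s ϑ ω : ℂ)) * (starRingEnd ℂ) (z s)‖ :=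
              Complex.abs_re_le_norm _
          _ = ‖z s‖ := by
              rw [norm_mul, mul_comm Complex.I, Complex.norm_exp_ofReal_mul_I,
                Complex.norm_conj, one_mul]
          _ ≤ Mz * Real.exp (-l * s) := hzle s hs0
      have hgint : IntegrableOn (fun s => Mz * Real.exp (-l * s)) (Set.Ioi t) volume :=
        (exp_neg_integrableOn_Ioi t hl).const_mul Mz
      have h := norm_integral_le_of_norm_le hgint hbd
      rw [← hI] at h
      have hval : ∫ s in Set.Ioi t, Mz * Real.exp (-l * s)
          = Mz / l * Real.exp (-l * t) := by
        rw [integral_const_mul, my_integral_exp_decay l t hl]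
        ring
      rw [Real.norm_eq_abs] at h
      calc |I| ≤ ∫ s in Set.Ioi t, Mz * Real.exp (-l * s) := h
        _ = Mz / l * Real.exp (-l * t) := hval
    · rw [hI, integral_undef hint]
      simp only [abs_zero]
      positivity
  -- bound on the exponential factor
  have hexp : |Real.exp (-μ * I) - 1|
      ≤ μ * Mz / l * Real.exp (μ * Mz / l) * Real.exp (-l * t) := by
    have h1 := my_abs_exp_sub_one_le (-μ * I)
    have hexp_le_one : Real.exp (-l * t) ≤ 1 :=
      Real.exp_le_one_iff.mpr (by nlinarith)
    have h2 : |-μ * I| ≤ μ * Mz / l * Real.exp (-l * t) := by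
      rw [abs_mul, abs_neg, abs_of_pos hμ]
      calc μ * |I| ≤ μ * (Mz / l * Real.exp (-l * t)) := by
            exact mul_le_mul_of_nonneg_left habsI hμ.le
        _ = μ * Mz / l * Real.exp (-l * t) := by ring
    have h3 : |-μ * I| ≤ μ * Mz / l := by
      calc |-μ * I| ≤ μ * Mz / l * Real.exp (-l * t) := h2
        _ ≤ μ * Mz / l * 1 := by
            exact mul_le_mul_of_nonneg_left hexp_le_one
              (div_nonneg (mul_nonneg hμ.le hMz0) hl.le)
        _ = μ * Mz / l := mul_one _
    calc |Real.exp (-μ * I) - 1| ≤ |-μ * I| * Real.exp |-μ * I| := h1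
      _ ≤ (μ * Mz / l * Real.exp (-l * t)) * Real.exp (μ * Mz / l) := by
          exact mul_le_mul h2 (Real.exp_le_exp.mpr h3) (Real.exp_pos _).le
            (mul_nonneg (div_nonneg (mul_nonneg hμ.le hMz0) hl.le) (Real.exp_pos _).le)
      _ = μ * Mz / l * Real.exp (μ * Mz / l) * Real.exp (-l * t) := by ring
  -- bound from Lipschitz continuity
  have hlipb : |f ϑ ω - f (Θ t ϑ ω - ω * t) ω| ≤ K * (MT * Real.exp (-l * t)) := by
    calc |f ϑ ω - f (Θ t ϑ ω - ω * t) ω| ≤ K * |ϑ - (Θ t ϑ ω - ω * t)| := hlip _ _ _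
      _ = K * |Θ t ϑ ω - ϑ - ω * t| := by rw [abs_sub_comm]; ring_nf
      _ ≤ K * (MT * Real.exp (-l * t)) :=
          mul_le_mul_of_nonneg_left (hTle t ht ϑ ω) hK0
  -- combine
  have hkey : f ϑ ω * Real.exp (-μ * I) - f (Θ t ϑ ω - ω * t) ω
      = f ϑ ω * (Real.exp (-μ * I) - 1) + (f ϑ ω - f (Θ t ϑ ω - ω * t) ω) := by ring
  rw [hkey]
  calc |f ϑ ω * (Real.exp (-μ * I) - 1) + (f ϑ ω - f (Θ t ϑ ω - ω * t) ω)|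
      ≤ |f ϑ ω * (Real.exp (-μ * I) - 1)| + |f ϑ ω - f (Θ t ϑ ω - ω * t) ω| :=
        abs_add_le _ _
    _ = f ϑ ω * |Real.exp (-μ * I) - 1| + |f ϑ ω - f (Θ t ϑ ω - ω * t) ω| := by
        rw [abs_mul, abs_of_nonneg (hf0 ϑ ω)]
    _ ≤ B * (μ * Mz / l * Real.exp (μ * Mz / l) * Real.exp (-l * t))
        + K * (MT * Real.exp (-l * t)) := by
        refine add_le_add ?_ hlipb
        exact mul_le_mul (hB ϑ ω) hexp (abs_nonneg _) hB0
    _ ≤ (B * (μ * Mz / l * Real.exp (μ * Mz / l)) + K * MT + 1) * Real.exp (-l * t) := by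
        nlinarith [Real.exp_pos (-l * t)]

end
end

section
/- Let γ≥2 and let z:[0,∞)→ℂ be measurable with ‖z‖_{(γ)} < ∞. There exists a constant C>0 depending only on γ such that if μ>0 satisfies Cμ‖z‖_{(γ)} < 1, then there is a unique map Θ:[0,∞)×ℝ×ℝ→ℝ with ‖Θ(t,ϑ,ω) − ϑ − ωt‖_{(γ−1)} < ∞ which is an asymptotic characteristic for z, and it satisfies ‖Θ(t,ϑ,ω) − ϑ − ωt‖_{(γ−1)} ≤ Cμ‖z‖_{(γ)}. -/
open MeasureTheory

noncomputable section

/-- The Japanese bracket `⟨t⟩ = (1+t²)^{1/2}`. -/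
def jap (t : ℝ) : ℝ := Real.sqrt (1 + t ^ 2)

/-- Weighted sup-norm `sup_{t ≥ 0} |z t| ⟨t⟩^γ` for `z : ℝ → ℂ`. -/
def polyNormZ (γ : ℝ) (z : ℝ → ℂ) : ℝ :=
  ⨆ t : {t : ℝ // 0 ≤ t}, ‖z t.1‖ * jap t.1 ^ γ

/-- Finiteness of the weighted sup-norm for `z : ℝ → ℂ`. -/
def PolyBddZ (γ : ℝ) (z : ℝ → ℂ) : Prop :=
  BddAbove (Set.range fun t : {t : ℝ // 0 ≤ t} => ‖z t.1‖ * jap t.1 ^ γ)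

/-- Weighted sup-norm `sup_{t ≥ 0, ϑ, ω} |h t ϑ ω| ⟨t⟩^γ`. -/
def polyNormH (γ : ℝ) (h : ℝ → ℝ → ℝ → ℂ) : ℝ :=
  ⨆ p : {t : ℝ // 0 ≤ t} × ℝ × ℝ, ‖h p.1.1 p.2.1 p.2.2‖ * jap p.1.1 ^ γ

/-- Finiteness of the weighted sup-norm for `h`. -/
def PolyBddH (γ : ℝ) (h : ℝ → ℝ → ℝ → ℂ) : Prop :=
  BddAbove (Set.range fun p : {t : ℝ // 0 ≤ t} × ℝ × ℝ =>
    ‖h p.1.1 p.2.1 p.2.2‖ * jap p.1.1 ^ γ)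

section AuxAsymChar
open Set

lemma jap_pos (t : ℝ) : 0 < jap t := Real.sqrt_pos.mpr (by positivity)

lemma one_le_jap (t : ℝ) : 1 ≤ jap t := by
  rw [jap]
  nlinarith [Real.sq_sqrt (show (0:ℝ) ≤ 1 + t^2 by positivity), Real.sqrt_nonneg (1 + t^2), sq_nonneg (Real.sqrt (1+t^2) - 1)]

lemma jap_le_one_add {t : ℝ} (ht : 0 ≤ t) : jap t ≤ 1 + t := by
  rw [jap]
  have : (1 + t^2) ≤ (1+t)^2 := by nlinarith [sq_nonneg (1-t)]
  calc Real.sqrt (1 + t^2) ≤ Real.sqrt ((1+t)^2) := Real.sqrt_le_sqrt this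
    _ = 1 + t := Real.sqrt_sq (by linarith)

lemma one_add_le_sqrt2_jap {t : ℝ} (ht : 0 ≤ t) : 1 + t ≤ Real.sqrt 2 * jap t := by
  rw [jap, ← Real.sqrt_mul (by norm_num)]
  have h : (1+t)^2 ≤ 2 * (1 + t^2) := by nlinarith [sq_nonneg (1-t)]
  calc (1 + t) = Real.sqrt ((1+t)^2) := (Real.sqrt_sq (by linarith)).symm
    _ ≤ Real.sqrt (2 * (1 + t^2)) := Real.sqrt_le_sqrt h

lemma jap_zero : jap 0 = 1 := by simp [jap]

lemma expI_lip (a b : ℝ) : ‖Complex.exp (Complex.I * a) - Complex.exp (Complex.I * b)‖ ≤ |a - b| := by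
  have hd : ∀ x : ℝ, HasDerivAt (fun t : ℝ => Complex.exp (Complex.I * t))
      (Complex.exp (Complex.I * x) * Complex.I) x := by
    intro x
    have h1 : HasDerivAt (fun w : ℂ => Complex.exp (Complex.I * w))
        (Complex.exp (Complex.I * x) * Complex.I) (x : ℂ) := by
      simpa [Function.comp_def] using (Complex.hasDerivAt_exp ((Complex.I * x))).comp (x:ℂ)
        ((hasDerivAt_id (x:ℂ)).const_mul Complex.I)
    exact h1.comp_ofReal
  have hl : LipschitzWith 1 (fun t : ℝ => Complex.exp (Complex.I * t)) := by
    apply lipschitzWith_of_nnnorm_deriv_le (fun x => (hd x).differentiableAt)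
    intro x
    rw [(hd x).deriv]
    simp only [nnnorm_mul]
    have : ‖Complex.exp (Complex.I * x)‖₊ = 1 := by
      ext
      simp [Complex.norm_exp]
    simp [this]
  have := hl.dist_le_mul a b
  simpa [Complex.dist_eq, Real.dist_eq] using this

lemma jap_rpow_pos (t p : ℝ) : 0 < jap t ^ p := Real.rpow_pos_of_pos (jap_pos t) p

lemma one_le_jap_rpow {t p : ℝ} (hp : 0 ≤ p) : 1 ≤ jap t ^ p :=
  Real.one_le_rpow (one_le_jap t) hp

/-- integrability of the shifted power -/
lemma integrableOn_one_add_rpow {γ : ℝ} (hγ : 1 < γ) {t : ℝ} (ht : 0 ≤ t) :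
    IntegrableOn (fun s : ℝ => (1 + s) ^ (-γ)) (Ioi t) := by
  have h1 : IntegrableOn (fun u : ℝ => u ^ (-γ)) (Ioi (1 + t)) :=
    integrableOn_Ioi_rpow_of_lt (by linarith) (by linarith)
  have hmp : MeasurePreserving (fun x : ℝ => 1 + x) volume volume :=
    measurePreserving_add_left volume 1
  have hemb : MeasurableEmbedding (fun x : ℝ => 1 + x) :=
    (MeasurableEquiv.addLeft (1:ℝ)).measurableEmbedding
  have himg : (fun x : ℝ => 1 + x) '' (Ioi t) = Ioi (1 + t) := by
    simpa [add_comm] using Set.image_add_const_Ioi (a := (1:ℝ)) (b := t)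
  have := (hmp.integrableOn_image hemb (f := fun u : ℝ => u ^ (-γ)) (s := Ioi t))
  rw [himg] at this
  exact (this.mp h1)

lemma integral_one_add_rpow {γ : ℝ} (hγ : 1 < γ) {t : ℝ} (ht : 0 ≤ t) :
    ∫ s in Ioi t, (1 + s) ^ (-γ) = (1 + t) ^ (1 - γ) / (γ - 1) := by
  have hmp : MeasurePreserving (fun x : ℝ => 1 + x) volume volume :=
    measurePreserving_add_left volume 1
  have hemb : MeasurableEmbedding (fun x : ℝ => 1 + x) :=
    (MeasurableEquiv.addLeft (1:ℝ)).measurableEmbedding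
  have himg : (fun x : ℝ => 1 + x) '' (Ioi t) = Ioi (1 + t) := by
    simpa [add_comm] using Set.image_add_const_Ioi (a := (1:ℝ)) (b := t)
  have h2 := hmp.setIntegral_image_emb hemb (fun u : ℝ => u ^ (-γ)) (Ioi t)
  rw [himg] at h2
  rw [← h2, integral_Ioi_rpow_of_lt (by linarith) (by linarith)]
  rw [show -γ + 1 = -(γ-1) by ring, Real.rpow_neg (by linarith)]
  rw [show (1:ℝ) - γ = -(γ-1) by ring, Real.rpow_neg (by linarith)]
  rw [neg_div_neg_eq]

lemma continuous_jap : Continuous jap := by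
  apply Real.continuous_sqrt.comp
  continuity

lemma continuous_w (γ : ℝ) : Continuous (fun s : ℝ => jap s ^ (-γ)) :=
  continuous_jap.rpow_const (fun x => Or.inl (jap_pos x).ne')

lemma w_le {γ : ℝ} (hγ0 : 0 ≤ γ) {s : ℝ} (hs : 0 ≤ s) :
    jap s ^ (-γ) ≤ Real.sqrt 2 ^ γ * (1 + s) ^ (-γ) := by
  have h2 : (0:ℝ) < Real.sqrt 2 := by positivity
  have hq : (0:ℝ) < (1 + s) / Real.sqrt 2 := by positivity
  have h1 : (1 + s) / Real.sqrt 2 ≤ jap s := by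
    rw [div_le_iff₀ h2, mul_comm]
    exact one_add_le_sqrt2_jap hs
  calc jap s ^ (-γ) ≤ ((1 + s) / Real.sqrt 2) ^ (-γ) :=
        Real.rpow_le_rpow_of_nonpos hq h1 (neg_nonpos.mpr hγ0)
    _ = Real.sqrt 2 ^ γ * (1 + s) ^ (-γ) := by
        rw [Real.div_rpow (by linarith) h2.le, Real.rpow_neg h2.le, div_eq_mul_inv, inv_inv, mul_comm]

lemma w_neg_exp_nonpos {γ : ℝ} (hγ : 2 ≤ γ) : -γ ≤ 0 := by linarith

lemma integrableOn_w {γ : ℝ} (hγ : 2 ≤ γ) {t : ℝ} (ht : 0 ≤ t) :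
    IntegrableOn (fun s : ℝ => jap s ^ (-γ)) (Ioi t) := by
  have hg : IntegrableOn (fun s : ℝ => Real.sqrt 2 ^ γ * (1 + s) ^ (-γ)) (Ioi t) :=
    (integrableOn_one_add_rpow (by linarith) ht).const_mul _
  refine hg.mono' ((continuous_w γ).aestronglyMeasurable.restrict) ?_
  rw [ae_restrict_iff' measurableSet_Ioi]
  filter_upwards with s hs
  rw [Real.norm_eq_abs, abs_of_pos (jap_rpow_pos s (-γ))]
  exact w_le (by linarith) (le_trans ht (le_of_lt hs))

lemma integral_w_le {γ : ℝ} (hγ : 2 ≤ γ) {t : ℝ} (ht : 0 ≤ t) :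
    ∫ s in Ioi t, jap s ^ (-γ) ≤ Real.sqrt 2 ^ γ * jap t ^ (1 - γ) := by
  have hg : IntegrableOn (fun s : ℝ => Real.sqrt 2 ^ γ * (1 + s) ^ (-γ)) (Ioi t) :=
    (integrableOn_one_add_rpow (by linarith) ht).const_mul _
  have h1 : ∫ s in Ioi t, jap s ^ (-γ) ≤ ∫ s in Ioi t, Real.sqrt 2 ^ γ * (1 + s) ^ (-γ) := by
    refine setIntegral_mono_on (integrableOn_w hγ ht) hg measurableSet_Ioi ?_
    exact fun s hs => w_le (by linarith) (le_trans ht (le_of_lt hs))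
  have h2 : ∫ s in Ioi t, Real.sqrt 2 ^ γ * (1 + s) ^ (-γ)
      = Real.sqrt 2 ^ γ * ((1 + t) ^ (1 - γ) / (γ - 1)) := by
    rw [integral_const_mul, integral_one_add_rpow (by linarith) ht]
  have h3 : (1 + t) ^ (1 - γ) / (γ - 1) ≤ jap t ^ (1 - γ) := by
    have hb : (1 + t) ^ (1 - γ) ≤ jap t ^ (1 - γ) :=
      Real.rpow_le_rpow_of_nonpos (jap_pos t) (jap_le_one_add ht) (by linarith)
    have hc : (1 + t) ^ (1 - γ) / (γ - 1) ≤ (1 + t) ^ (1 - γ) := by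
      apply div_le_self (Real.rpow_nonneg (by linarith) _) (by linarith)
    linarith
  have hC : (0:ℝ) ≤ Real.sqrt 2 ^ γ := by positivity
  calc ∫ s in Ioi t, jap s ^ (-γ) ≤ Real.sqrt 2 ^ γ * ((1 + t) ^ (1 - γ) / (γ - 1)) := by
        rw [← h2]; exact h1
    _ ≤ Real.sqrt 2 ^ γ * jap t ^ (1 - γ) := by
        exact mul_le_mul_of_nonneg_left h3 hC

section FIX
variable {ζ : ℝ → ℂ} {D : ℝ → ℝ} {κ μ : ℝ} {ϑ ω : ℝ}

/-- integrand -/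
def gI (ζ : ℝ → ℂ) (ϑ ω : ℝ) (φ : ℝ → ℝ) (s : ℝ) : ℝ :=
  (Complex.exp (Complex.I * ((ϑ + ω * s + φ s : ℝ) : ℂ)) * (starRingEnd ℂ) (ζ s)).im

lemma gI_abs_le (hD : ∀ s, ‖ζ s‖ ≤ D s) (φ : ℝ → ℝ) (s : ℝ) :
    |gI ζ ϑ ω φ s| ≤ D s := by
  have h1 : |gI ζ ϑ ω φ s| ≤ ‖Complex.exp (Complex.I * ((ϑ + ω * s + φ s : ℝ) : ℂ)) *
      (starRingEnd ℂ) (ζ s)‖ := Complex.abs_im_le_norm _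
  rw [norm_mul] at h1
  have h2 : ‖Complex.exp (Complex.I * ((ϑ + ω * s + φ s : ℝ) : ℂ))‖ = 1 := by
    rw [Complex.norm_exp]; simp
  rw [h2, one_mul, Complex.norm_conj] at h1
  exact h1.trans (hD s)

lemma gI_sub_le (φ₁ φ₂ : ℝ → ℝ) (s : ℝ) :
    |gI ζ ϑ ω φ₁ s - gI ζ ϑ ω φ₂ s| ≤ |φ₁ s - φ₂ s| * ‖ζ s‖ := by
  have h0 : gI ζ ϑ ω φ₁ s - gI ζ ϑ ω φ₂ s =
      ((Complex.exp (Complex.I * ((ϑ + ω * s + φ₁ s : ℝ) : ℂ)) -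
        Complex.exp (Complex.I * ((ϑ + ω * s + φ₂ s : ℝ) : ℂ))) * (starRingEnd ℂ) (ζ s)).im := by
    rw [sub_mul, Complex.sub_im]; rfl
  rw [h0]
  have h1 := Complex.abs_im_le_norm ((Complex.exp (Complex.I * ((ϑ + ω * s + φ₁ s : ℝ) : ℂ)) -
        Complex.exp (Complex.I * ((ϑ + ω * s + φ₂ s : ℝ) : ℂ))) * (starRingEnd ℂ) (ζ s))
  rw [norm_mul, Complex.norm_conj] at h1
  refine h1.trans ?_
  apply mul_le_mul_of_nonneg_right _ (norm_nonneg _)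
  have := expI_lip (ϑ + ω * s + φ₁ s) (ϑ + ω * s + φ₂ s)
  simpa using this

lemma gI_meas (hζ : Measurable ζ) {φ : ℝ → ℝ} (hφ : Measurable φ) :
    Measurable (gI ζ ϑ ω φ) := by
  have hmul : Measurable (fun s : ℝ => Complex.exp (Complex.I * ((ϑ + ω * s + φ s : ℝ) : ℂ)) *
      (starRingEnd ℂ) (ζ s)) := by
    apply Measurable.mul
    · apply Complex.measurable_exp.comp
      apply Measurable.const_mul
      exact Complex.measurable_ofReal.comp (((measurable_const.mul measurable_id).const_add ϑ).add hφ : Measurable fun s : ℝ => ϑ + ω * s + φ s)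
    · exact (Complex.continuous_conj.measurable).comp hζ
  exact Complex.measurable_im.comp hmul

lemma gI_int (hζ : Measurable ζ) (hDi : Integrable D) (hD : ∀ s, ‖ζ s‖ ≤ D s)
    {φ : ℝ → ℝ} (hφ : Measurable φ) : Integrable (gI ζ ϑ ω φ) := by
  refine hDi.mono' (gI_meas hζ hφ).aestronglyMeasurable ?_
  filter_upwards with s
  rw [Real.norm_eq_abs]
  exact gI_abs_le hD φ s

end FIX

section FIX2
variable {ζ : ℝ → ℂ} {D : ℝ → ℝ} {κ b μ : ℝ} {ϑ ω : ℝ}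

lemma intIoi_split {f : ℝ → ℝ} (hf : Integrable f) {t₁ t₂ : ℝ} (h : t₁ ≤ t₂) :
    ∫ s in Ioi t₁, f s = (∫ s in Ioc t₁ t₂, f s) + ∫ s in Ioi t₂, f s := by
  rw [← setIntegral_union (Set.Ioc_disjoint_Ioi le_rfl) measurableSet_Ioi
    hf.integrableOn hf.integrableOn, Set.Ioc_union_Ioi_eq_Ioi h]

lemma fix_exists (hζ : Measurable ζ) (hDi : Integrable D)
    (hD : ∀ s, ‖ζ s‖ ≤ D s) (hDb : ∀ s, D s ≤ b)
    (hμ : 0 < μ) (hκ : ∀ t : ℝ, ∫ s in Ioi t, D s ≤ κ) (hq : μ * κ < 1) (ϑ ω : ℝ) :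
    ∃ φ : ℝ → ℝ, Continuous φ ∧
      (∀ t, φ t = μ * ∫ s in Ioi t, gI ζ ϑ ω φ s) ∧
      (∀ t, |φ t| ≤ μ * ∫ s in Ioi t, D s) := by
  have hD0 : ∀ s, 0 ≤ D s := fun s => (norm_nonneg _).trans (hD s)
  have hb0 : 0 ≤ b := (hD0 0).trans (hDb 0)
  have hκ0 : 0 ≤ κ := le_trans (integral_nonneg (fun s => hD0 s)) (hκ 0)
  -- basic integral bounds for any measurable bounded φ
  have habs : ∀ (φ : ℝ → ℝ), Measurable φ → ∀ t : ℝ,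
      |∫ s in Ioi t, gI ζ ϑ ω φ s| ≤ ∫ s in Ioi t, D s := by
    intro φ hφ t
    have h1 := norm_integral_le_integral_norm (μ := volume.restrict (Ioi t)) (gI ζ ϑ ω φ)
    rw [Real.norm_eq_abs] at h1
    refine h1.trans ?_
    refine integral_mono ((gI_int hζ hDi hD hφ).abs.integrableOn) hDi.integrableOn ?_
    intro s
    show ‖gI ζ ϑ ω φ s‖ ≤ D s
    rw [Real.norm_eq_abs]
    exact gI_abs_le hD φ s
  -- Lipschitz continuity in t of the integral map
  have hlip : ∀ (φ : ℝ → ℝ), Measurable φ → ∀ t₁ t₂ : ℝ,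
      dist (μ * ∫ s in Ioi t₁, gI ζ ϑ ω φ s) (μ * ∫ s in Ioi t₂, gI ζ ϑ ω φ s)
        ≤ μ * b * dist t₁ t₂ := by
    have key : ∀ (φ : ℝ → ℝ), Measurable φ → ∀ t₁ t₂ : ℝ, t₁ ≤ t₂ →
        dist (μ * ∫ s in Ioi t₁, gI ζ ϑ ω φ s) (μ * ∫ s in Ioi t₂, gI ζ ϑ ω φ s)
          ≤ μ * b * (t₂ - t₁) := by
      intro φ hφ t₁ t₂ h
      have hsplit := intIoi_split (f := gI ζ ϑ ω φ) (gI_int hζ hDi hD hφ) h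
      rw [Real.dist_eq, ← mul_sub, abs_mul, abs_of_pos hμ]
      have h2 : (∫ s in Ioi t₁, gI ζ ϑ ω φ s) - ∫ s in Ioi t₂, gI ζ ϑ ω φ s
          = ∫ s in Ioc t₁ t₂, gI ζ ϑ ω φ s := by rw [hsplit]; ring
      rw [h2, mul_assoc]
      apply mul_le_mul_of_nonneg_left _ hμ.le
      have h3 : ‖∫ s in Ioc t₁ t₂, gI ζ ϑ ω φ s‖ ≤ b * (volume (Ioc t₁ t₂)).toReal := by
        apply norm_setIntegral_le_of_norm_le_const (by rw [Real.volume_Ioc]; exact ENNReal.ofReal_lt_top)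
        intro s _
        rw [Real.norm_eq_abs]
        exact (gI_abs_le hD φ s).trans (hDb s)
      rw [Real.norm_eq_abs] at h3
      refine h3.trans ?_
      rw [Real.volume_Ioc, ENNReal.toReal_ofReal (by linarith)]
    intro φ hφ t₁ t₂
    rcases le_total t₁ t₂ with h | h
    · refine (key φ hφ t₁ t₂ h).trans (mul_le_mul_of_nonneg_left ?_ (by positivity))
      rw [Real.dist_eq, abs_sub_comm]
      exact le_abs_self _
    · rw [dist_comm]
      refine (key φ hφ t₂ t₁ h).trans (mul_le_mul_of_nonneg_left ?_ (by positivity))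
      rw [Real.dist_eq]
      exact le_abs_self _
  -- the map T on bounded continuous functions
  set T : BoundedContinuousFunction ℝ ℝ → BoundedContinuousFunction ℝ ℝ := fun φ =>
    BoundedContinuousFunction.ofNormedAddCommGroup
      (fun t => μ * ∫ s in Ioi t, gI ζ ϑ ω (⇑φ) s)
      (by
        have : LipschitzWith (Real.toNNReal (μ * b)) (fun t => μ * ∫ s in Ioi t, gI ζ ϑ ω (⇑φ) s) := by
          apply LipschitzWith.of_dist_le_mul
          intro t₁ t₂
          rw [Real.coe_toNNReal _ (by positivity)]
          exact hlip (⇑φ) φ.continuous.measurable t₁ t₂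
        exact this.continuous)
      (μ * κ)
      (by
        intro t
        rw [Real.norm_eq_abs, abs_mul, abs_of_pos hμ]
        exact mul_le_mul_of_nonneg_left ((habs (⇑φ) φ.continuous.measurable t).trans (hκ t)) hμ.le) with hT
  have hTapp : ∀ (φ : BoundedContinuousFunction ℝ ℝ) (t : ℝ),
      T φ t = μ * ∫ s in Ioi t, gI ζ ϑ ω (⇑φ) s := fun φ t => rfl
  -- contraction
  have hcontr : ContractingWith (Real.toNNReal (μ * κ)) T := by
    constructor
    · rw [← NNReal.coe_lt_one, Real.coe_toNNReal _ (by positivity)]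
      exact hq
    · apply LipschitzWith.of_dist_le_mul
      intro φ₁ φ₂
      rw [Real.coe_toNNReal _ (by positivity)]
      apply (BoundedContinuousFunction.dist_le (by positivity)).mpr
      intro t
      rw [hTapp, hTapp, Real.dist_eq, ← mul_sub, abs_mul, abs_of_pos hμ]
      have hint1 := gI_int hζ hDi hD φ₁.continuous.measurable (ϑ := ϑ) (ω := ω)
      have hint2 := gI_int hζ hDi hD φ₂.continuous.measurable (ϑ := ϑ) (ω := ω)
      have h4 : (∫ s in Ioi t, gI ζ ϑ ω (⇑φ₁) s) - ∫ s in Ioi t, gI ζ ϑ ω (⇑φ₂) s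
          = ∫ s in Ioi t, (gI ζ ϑ ω (⇑φ₁) s - gI ζ ϑ ω (⇑φ₂) s) := by
        rw [integral_sub hint1.integrableOn hint2.integrableOn]
      rw [h4]
      have h5 : |∫ s in Ioi t, (gI ζ ϑ ω (⇑φ₁) s - gI ζ ϑ ω (⇑φ₂) s)|
          ≤ ∫ s in Ioi t, dist φ₁ φ₂ * D s := by
        have h6 := norm_integral_le_integral_norm (μ := volume.restrict (Ioi t))
          (fun s => gI ζ ϑ ω (⇑φ₁) s - gI ζ ϑ ω (⇑φ₂) s)
        rw [Real.norm_eq_abs] at h6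
        refine h6.trans ?_
        refine integral_mono ((hint1.sub hint2).abs.integrableOn)
          ((hDi.const_mul _).integrableOn) ?_
        intro s
        show ‖gI ζ ϑ ω (⇑φ₁) s - gI ζ ϑ ω (⇑φ₂) s‖ ≤ dist φ₁ φ₂ * D s
        rw [Real.norm_eq_abs]
        refine (gI_sub_le _ _ s).trans ?_
        refine mul_le_mul ?_ (hD s) (norm_nonneg _) dist_nonneg
        have := BoundedContinuousFunction.dist_coe_le_dist (f := φ₁) (g := φ₂) s
        rwa [Real.dist_eq] at this
      rw [integral_const_mul] at h5
      calc μ * |∫ s in Ioi t, (gI ζ ϑ ω (⇑φ₁) s - gI ζ ϑ ω (⇑φ₂) s)|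
          ≤ μ * (dist φ₁ φ₂ * ∫ s in Ioi t, D s) := mul_le_mul_of_nonneg_left h5 hμ.le
        _ ≤ μ * (dist φ₁ φ₂ * κ) := by
            apply mul_le_mul_of_nonneg_left _ hμ.le
            exact mul_le_mul_of_nonneg_left (hκ t) dist_nonneg
        _ = μ * κ * dist φ₁ φ₂ := by ring
  -- fixed point
  set φ₀ : BoundedContinuousFunction ℝ ℝ := hcontr.fixedPoint T with hφ₀
  have hfix : T φ₀ = φ₀ := hcontr.fixedPoint_isFixedPt
  refine ⟨⇑φ₀, φ₀.continuous, ?_, ?_⟩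
  · intro t
    conv_lhs => rw [← hfix]
    exact hTapp φ₀ t
  · intro t
    have h7 : φ₀ t = μ * ∫ s in Ioi t, gI ζ ϑ ω (⇑φ₀) s := by
      conv_lhs => rw [← hfix]
      exact hTapp φ₀ t
    rw [h7, abs_mul, abs_of_pos hμ]
    exact mul_le_mul_of_nonneg_left (habs (⇑φ₀) φ₀.continuous.measurable t) hμ.le

end FIX2

section UNIQ
variable {ζ : ℝ → ℂ} {D : ℝ → ℝ} {κ μ : ℝ} {ϑ ω : ℝ}

/-- any bounded solution on `[0,∞)` has an integrable integrand on each tail -/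
lemma sol_integrable (hζ : Measurable ζ) (hDi : Integrable D)
    (hD : ∀ s, ‖ζ s‖ ≤ D s) (hμ : 0 < μ) {ψ : ℝ → ℝ}
    (hψe : ∀ t, 0 ≤ t → ψ t = μ * ∫ s in Ioi t, gI ζ ϑ ω ψ s) :
    ∀ t, 0 ≤ t → IntegrableOn (gI ζ ϑ ω ψ) (Ioi t) := by
  set A : Set ℝ := {t | 0 ≤ t ∧ ¬ IntegrableOn (gI ζ ϑ ω ψ) (Ioi t) volume} with hA
  -- on A the solution vanishes
  have hψ0 : ∀ t ∈ A, ψ t = 0 := by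
    intro t ht
    rw [hψe t ht.1, integral_undef ht.2, mul_zero]
  have hdc : ∀ ⦃u v : ℝ⦄, u ∈ A → 0 ≤ v → v ≤ u → v ∈ A := by
    intro u v hu hv hvu
    exact ⟨hv, fun h => hu.2 (h.mono_set (Set.Ioi_subset_Ioi hvu))⟩
  -- the ψ-free integrand
  set mf : ℝ → ℝ := fun s => (Complex.exp (Complex.I * ((ϑ + ω * s + 0 : ℝ) : ℂ)) *
      (starRingEnd ℂ) (ζ s)).im with hmf
  have hmf_eq : mf = gI ζ ϑ ω (fun _ => 0) := rfl
  have hmf_int : Integrable mf := by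
    rw [hmf_eq]; exact gI_int hζ hDi hD measurable_const
  have hAg : ∀ s ∈ A, gI ζ ϑ ω ψ s = mf s := by
    intro s hs
    simp only [gI, hmf, hψ0 s hs]
  -- main claim: A is empty
  have hAempty : A = ∅ := by
    by_contra hne
    obtain ⟨t₀, ht₀⟩ := Set.nonempty_iff_ne_empty.mpr hne
    by_cases hbdd : BddAbove A
    · set a := sSup A with ha
      have ht₀a : t₀ ≤ a := le_csSup hbdd ht₀
      have ha0 : 0 ≤ a := ht₀.1.trans ht₀a
      have h1 : ∀ s, a < s → IntegrableOn (gI ζ ϑ ω ψ) (Ioi s) := by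
        intro s hs
        by_contra hcon
        exact absurd (le_csSup hbdd (⟨ha0.trans hs.le, hcon⟩ : s ∈ A)) (not_le.mpr hs)
      have h2 : AEStronglyMeasurable (gI ζ ϑ ω ψ) (volume.restrict (Ioi a)) := by
        have hun : Ioi a = ⋃ n : ℕ, Ioi (a + ((n:ℝ) + 1)⁻¹) := by
          ext x
          simp only [Set.mem_Ioi, Set.mem_iUnion]
          constructor
          · intro hx
            obtain ⟨n, hn⟩ := exists_nat_one_div_lt (show 0 < x - a by linarith)
            exact ⟨n, by rw [one_div] at hn; linarith⟩
          · rintro ⟨n, hn⟩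
            have : (0:ℝ) < ((n:ℝ) + 1)⁻¹ := by positivity
            linarith
        rw [hun]
        rw [aestronglyMeasurable_iUnion_iff]
        intro n
        have : (0:ℝ) < ((n:ℝ) + 1)⁻¹ := by positivity
        exact (h1 _ (by linarith)).aestronglyMeasurable
      have h3 : IntegrableOn (gI ζ ϑ ω ψ) (Ioi a) := by
        refine Integrable.mono' hDi.integrableOn h2 ?_
        filter_upwards with s
        rw [Real.norm_eq_abs]
        exact gI_abs_le hD ψ s
      have h4 : IntegrableOn (gI ζ ϑ ω ψ) (Ioc t₀ a) := by
        have hae : ∀ᵐ s ∂(volume.restrict (Ioc t₀ a)), mf s = gI ζ ϑ ω ψ s := by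
          have hne' : ∀ᵐ s : ℝ ∂volume, s ≠ a := by
            refine ae_iff.mpr ?_
            have hset : {x : ℝ | ¬ x ≠ a} = {a} := by ext x; simp
            rw [hset]
            exact measure_singleton a
          have h5 := ae_restrict_of_ae (μ := volume) (s := Ioc t₀ a) hne'
          filter_upwards [h5, ae_restrict_mem measurableSet_Ioc] with s hs hs2
          have hsA : s ∈ A := by
            have hsa : s < a := lt_of_le_of_ne hs2.2 hs
            obtain ⟨u, hu, hsu⟩ := exists_lt_of_lt_csSup ⟨t₀, ht₀⟩ hsa
            exact hdc hu (ht₀.1.trans hs2.1.le) hsu.le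
          exact (hAg s hsA).symm
        exact (hmf_int.integrableOn).congr hae
      have h6 : IntegrableOn (gI ζ ϑ ω ψ) (Ioi t₀) := by
        rw [← Set.Ioc_union_Ioi_eq_Ioi ht₀a]
        exact h4.union h3
      exact ht₀.2 h6
    · have hall : ∀ s, 0 ≤ s → s ∈ A := by
        intro s hs
        obtain ⟨u, hu, hsu⟩ := not_bddAbove_iff.mp hbdd s
        exact hdc hu hs hsu.le
      have h7 : IntegrableOn (gI ζ ϑ ω ψ) (Ioi t₀) := by
        refine (hmf_int.integrableOn).congr_fun ?_ measurableSet_Ioi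
        intro s hs
        exact (hAg s (hall s (ht₀.1.trans (le_of_lt hs)))).symm
      exact ht₀.2 h7
  intro t ht
  by_contra hcon
  rw [Set.eq_empty_iff_forall_notMem] at hAempty
  exact hAempty t ⟨ht, hcon⟩

end UNIQ

section UNIQ2
variable {ζ : ℝ → ℂ} {D : ℝ → ℝ} {κ μ : ℝ} {ϑ ω : ℝ}

lemma sol_unique (hζ : Measurable ζ) (hDi : Integrable D)
    (hD : ∀ s, ‖ζ s‖ ≤ D s) (hμ : 0 < μ)
    (hκ : ∀ t : ℝ, ∫ s in Ioi t, D s ≤ κ) (hq : μ * κ < 1)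
    {φ ψ : ℝ → ℝ} (hφm : Measurable φ)
    {Bφ : ℝ} (hφb : ∀ t, 0 ≤ t → |φ t| ≤ Bφ) {Bψ : ℝ} (hψb : ∀ t, 0 ≤ t → |ψ t| ≤ Bψ)
    (hφe : ∀ t, 0 ≤ t → φ t = μ * ∫ s in Ioi t, gI ζ ϑ ω φ s)
    (hψe : ∀ t, 0 ≤ t → ψ t = μ * ∫ s in Ioi t, gI ζ ϑ ω ψ s) :
    ∀ t, 0 ≤ t → ψ t = φ t := by
  have hψint := sol_integrable hζ hDi hD hμ hψe
  have hφint : Integrable (gI ζ ϑ ω φ) := gI_int hζ hDi hD hφm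
  set S : Set ℝ := Set.range (fun t : {t : ℝ // 0 ≤ t} => |φ t.1 - ψ t.1|) with hS
  have hSne : S.Nonempty := ⟨_, ⟨⟨0, le_refl 0⟩, rfl⟩⟩
  have hSbdd : BddAbove S := by
    refine ⟨Bφ + Bψ, ?_⟩
    rintro x ⟨⟨t, ht⟩, rfl⟩
    calc |φ t - ψ t| ≤ |φ t| + |ψ t| := abs_sub _ _
      _ ≤ Bφ + Bψ := add_le_add (hφb t ht) (hψb t ht)
  set M := sSup S with hM
  have hMle : ∀ t, 0 ≤ t → |φ t - ψ t| ≤ M := fun t ht => le_csSup hSbdd ⟨⟨t, ht⟩, rfl⟩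
  have hM0 : 0 ≤ M := (abs_nonneg _).trans (hMle 0 le_rfl)
  have hstep : ∀ t, 0 ≤ t → |φ t - ψ t| ≤ (μ * κ) * M := by
    intro t ht
    rw [hφe t ht, hψe t ht, ← mul_sub, abs_mul, abs_of_pos hμ]
    have hsub : (∫ s in Ioi t, gI ζ ϑ ω φ s) - ∫ s in Ioi t, gI ζ ϑ ω ψ s
        = ∫ s in Ioi t, (gI ζ ϑ ω φ s - gI ζ ϑ ω ψ s) := by
      rw [integral_sub hφint.integrableOn (hψint t ht)]
    rw [hsub]
    have h6 := norm_integral_le_integral_norm (μ := volume.restrict (Ioi t))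
      (fun s => gI ζ ϑ ω φ s - gI ζ ϑ ω ψ s)
    rw [Real.norm_eq_abs] at h6
    have h7 : ∫ s in Ioi t, ‖gI ζ ϑ ω φ s - gI ζ ϑ ω ψ s‖ ≤ ∫ s in Ioi t, M * D s := by
      refine setIntegral_mono_on ((hφint.integrableOn.sub (hψint t ht)).norm)
        ((hDi.const_mul M).integrableOn) measurableSet_Ioi ?_
      intro s hs
      rw [Real.norm_eq_abs]
      refine (gI_sub_le _ _ s).trans ?_
      refine mul_le_mul (hMle s (ht.trans (le_of_lt hs))) (hD s)
        (norm_nonneg _) hM0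
    rw [integral_const_mul] at h7
    calc μ * |∫ s in Ioi t, (gI ζ ϑ ω φ s - gI ζ ϑ ω ψ s)|
        ≤ μ * (M * ∫ s in Ioi t, D s) := mul_le_mul_of_nonneg_left (h6.trans h7) hμ.le
      _ ≤ μ * (M * κ) := mul_le_mul_of_nonneg_left
          (mul_le_mul_of_nonneg_left (hκ t) hM0) hμ.le
      _ = (μ * κ) * M := by ring
  have hMM : M ≤ (μ * κ) * M := by
    refine csSup_le hSne ?_
    rintro x ⟨⟨t, ht⟩, rfl⟩
    exact hstep t ht
  have hMz : M ≤ 0 := by nlinarith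
  intro t ht
  have := (hMle t ht).trans hMz
  have h8 : φ t - ψ t = 0 := abs_nonpos_iff.mp this
  linarith [h8]

end UNIQ2

section MAIN
variable {γ : ℝ}

-- basic facts about the data
lemma setup (hγ : 2 ≤ γ) {z : ℝ → ℂ} (hz : Measurable z) (hbdd :
    BddAbove (Set.range fun t : {t : ℝ // 0 ≤ t} => ‖z t.1‖ * jap t.1 ^ γ)) :
    let N := polyNormZ γ z
    let ζ : ℝ → ℂ := fun s => if 0 ≤ s then z s else 0
    let D : ℝ → ℝ := fun s => N * Set.indicator (Ici 0) (fun u => jap u ^ (-γ)) s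
    Measurable ζ ∧ Integrable D ∧ (∀ s, ‖ζ s‖ ≤ D s) ∧ (∀ s, D s ≤ N) ∧
      (∀ t : ℝ, ∫ s in Ioi t, D s ≤ N * (Real.sqrt 2 ^ γ)) ∧
      (∀ t : ℝ, 0 ≤ t → ∫ s in Ioi t, D s ≤ N * (Real.sqrt 2 ^ γ) * jap t ^ (1 - γ)) ∧
      0 ≤ N := by
  intro N ζ D
  have hNs : ∀ s : ℝ, 0 ≤ s → ‖z s‖ * jap s ^ γ ≤ N := by
    intro s hs
    exact le_ciSup hbdd ⟨s, hs⟩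
  have hN0 : 0 ≤ N := le_trans (mul_nonneg (norm_nonneg _) (Real.rpow_nonneg (jap_pos 0).le _)) (hNs 0 le_rfl)
  have hjp : ∀ s : ℝ, (0:ℝ) < jap s ^ γ := fun s => Real.rpow_pos_of_pos (jap_pos s) γ
  have hrec : ∀ s : ℝ, jap s ^ γ * jap s ^ (-γ) = 1 := by
    intro s
    rw [← Real.rpow_add (jap_pos s), add_neg_cancel, Real.rpow_zero]
  have hζm : Measurable ζ := Measurable.ite measurableSet_Ici hz measurable_const
  have hwle1 : ∀ s : ℝ, jap s ^ (-γ) ≤ 1 := fun s =>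
    Real.rpow_le_one_of_one_le_of_nonpos (one_le_jap s) (by linarith)
  have hIci : IntegrableOn (fun u : ℝ => jap u ^ (-γ)) (Ici 0) :=
    (integrableOn_Ici_iff_integrableOn_Ioi).mpr (integrableOn_w hγ le_rfl)
  have hindint : Integrable (Set.indicator (Ici 0) (fun u : ℝ => jap u ^ (-γ))) :=
    (integrable_indicator_iff measurableSet_Ici).mpr hIci
  have hDi : Integrable D := hindint.const_mul N
  have hD : ∀ s, ‖ζ s‖ ≤ D s := by
    intro s
    by_cases hs : 0 ≤ s
    · have h1 : ζ s = z s := if_pos hs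
      have h2 : D s = N * jap s ^ (-γ) := by
        show N * _ = _
        rw [Set.indicator_of_mem (mem_Ici.mpr hs)]
      rw [h1, h2]
      have h3 : ‖z s‖ = (‖z s‖ * jap s ^ γ) * jap s ^ (-γ) := by
        rw [mul_assoc, hrec s, mul_one]
      rw [h3]
      exact mul_le_mul_of_nonneg_right (hNs s hs) (Real.rpow_nonneg (jap_pos s).le _)
    · have h1 : ζ s = 0 := if_neg hs
      have h2 : D s = 0 := by
        show N * _ = 0
        rw [Set.indicator_of_notMem (by simpa using hs), mul_zero]
      rw [h1, h2]
      simp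
  have hDb : ∀ s, D s ≤ N := by
    intro s
    show N * _ ≤ N
    by_cases hs : (0:ℝ) ≤ s
    · rw [Set.indicator_of_mem (mem_Ici.mpr hs)]
      calc N * jap s ^ (-γ) ≤ N * 1 := mul_le_mul_of_nonneg_left (hwle1 s) hN0
        _ = N := mul_one N
    · rw [Set.indicator_of_notMem (by simpa using hs), mul_zero]
      exact hN0
  have hind_nonneg : ∀ s : ℝ, 0 ≤ Set.indicator (Ici 0) (fun u : ℝ => jap u ^ (-γ)) s :=
    fun s => Set.indicator_nonneg (fun u _ => (Real.rpow_pos_of_pos (jap_pos u) _).le) s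
  have hκt : ∀ t : ℝ, 0 ≤ t → ∫ s in Ioi t, D s ≤ N * (Real.sqrt 2 ^ γ) * jap t ^ (1 - γ) := by
    intro t ht
    have h1 : ∫ s in Ioi t, D s = N * ∫ s in Ioi t,
        Set.indicator (Ici 0) (fun u : ℝ => jap u ^ (-γ)) s := integral_const_mul _ _
    have h2 : ∫ s in Ioi t, Set.indicator (Ici 0) (fun u : ℝ => jap u ^ (-γ)) s
        = ∫ s in Ioi t, jap s ^ (-γ) := by
      refine setIntegral_congr_fun measurableSet_Ioi ?_
      intro s hs
      exact Set.indicator_of_mem (mem_Ici.mpr (ht.trans (le_of_lt hs))) _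
    rw [h1, h2, mul_assoc]
    exact mul_le_mul_of_nonneg_left (integral_w_le hγ ht) hN0
  have hκ : ∀ t : ℝ, ∫ s in Ioi t, D s ≤ N * (Real.sqrt 2 ^ γ) := by
    intro t
    have h1 : ∫ s in Ioi t, D s = N * ∫ s in Ioi t,
        Set.indicator (Ici 0) (fun u : ℝ => jap u ^ (-γ)) s := integral_const_mul _ _
    have h2 : ∫ s in Ioi t, Set.indicator (Ici 0) (fun u : ℝ => jap u ^ (-γ)) s
        ≤ ∫ s, Set.indicator (Ici 0) (fun u : ℝ => jap u ^ (-γ)) s :=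
      setIntegral_le_integral hindint (Filter.Eventually.of_forall hind_nonneg)
    have h3 : ∫ s, Set.indicator (Ici 0) (fun u : ℝ => jap u ^ (-γ)) s
        = ∫ s in Ioi (0:ℝ), jap s ^ (-γ) := by
      rw [integral_indicator measurableSet_Ici, integral_Ici_eq_integral_Ioi]
    have h4 : ∫ s in Ioi (0:ℝ), jap s ^ (-γ) ≤ Real.sqrt 2 ^ γ := by
      have := integral_w_le hγ (le_refl (0:ℝ))
      rwa [jap_zero, Real.one_rpow, mul_one] at this
    calc ∫ s in Ioi t, D s = N * _ := h1
      _ ≤ N * ∫ s in Ioi (0:ℝ), jap s ^ (-γ) := by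
          rw [← h3]; exact mul_le_mul_of_nonneg_left h2 hN0
      _ ≤ N * (Real.sqrt 2 ^ γ) := mul_le_mul_of_nonneg_left h4 hN0
  exact ⟨hζm, hDi, hD, hDb, hκ, hκt, hN0⟩
end MAIN


end AuxAsymChar

section AuxAsymChar2

/-- Existence and uniqueness of the asymptotic characteristic for `z` in the
polynomially-weighted space, with the bound `‖Θ - ϑ - ωt‖_{(γ-1)} ≤ Cμ‖z‖_{(γ)}`. -/
theorem asymChar_exists_unique_poly
    (γ : ℝ) (hγ : 2 ≤ γ) :
    ∃ C > (0 : ℝ), ∀ z : ℝ → ℂ, Measurable z → PolyBddZ γ z →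
      ∀ μ : ℝ, 0 < μ → C * μ * polyNormZ γ z < 1 →
        ∃ Θ : ℝ → ℝ → ℝ → ℝ,
          PolyBddH (γ - 1) (fun t ϑ ω => ((Θ t ϑ ω - ϑ - ω * t : ℝ) : ℂ)) ∧
          IsAsymChar μ z Θ ∧
          polyNormH (γ - 1) (fun t ϑ ω => ((Θ t ϑ ω - ϑ - ω * t : ℝ) : ℂ)) ≤
            C * μ * polyNormZ γ z ∧
          ∀ Θ' : ℝ → ℝ → ℝ → ℝ,
            PolyBddH (γ - 1) (fun t ϑ ω => ((Θ' t ϑ ω - ϑ - ω * t : ℝ) : ℂ)) →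
            IsAsymChar μ z Θ' →
            ∀ t : ℝ, 0 ≤ t → ∀ ϑ ω : ℝ, Θ' t ϑ ω = Θ t ϑ ω := by
  classical
  refine ⟨Real.sqrt 2 ^ γ, Real.rpow_pos_of_pos (Real.sqrt_pos.mpr two_pos) γ, ?_⟩
  intro z hz hbdd μ hμ hsmall
  obtain ⟨hζm, hDi, hD, hDb, hκ, hκt, hN0⟩ := setup hγ hz hbdd
  set N := polyNormZ γ z with hN
  set C := Real.sqrt 2 ^ γ with hCdef
  set ζ : ℝ → ℂ := fun s => if 0 ≤ s then z s else 0 with hζdef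
  set D : ℝ → ℝ := fun s => N * Set.indicator (Set.Ici 0) (fun u => jap u ^ (-γ)) s with hDdef
  have hq : μ * (N * C) < 1 := by
    have : μ * (N * C) = C * μ * N := by ring
    rw [this]; exact hsmall
  have E : ∀ ϑ ω : ℝ, ∃ φ : ℝ → ℝ, Continuous φ ∧
      (∀ t, φ t = μ * ∫ s in Set.Ioi t, gI ζ ϑ ω φ s) ∧
      (∀ t, |φ t| ≤ μ * ∫ s in Set.Ioi t, D s) :=
    fun ϑ ω => fix_exists hζm hDi hD hDb hμ hκ hq ϑ ω
  set φf : ℝ → ℝ → ℝ → ℝ := fun ϑ ω => Classical.choose (E ϑ ω) with hφf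
  have hspec : ∀ ϑ ω : ℝ, Continuous (φf ϑ ω) ∧
      (∀ t, φf ϑ ω t = μ * ∫ s in Set.Ioi t, gI ζ ϑ ω (φf ϑ ω) s) ∧
      (∀ t, |φf ϑ ω t| ≤ μ * ∫ s in Set.Ioi t, D s) :=
    fun ϑ ω => Classical.choose_spec (E ϑ ω)
  have hkey : ∀ ϑ ω t : ℝ, 0 ≤ t → |φf ϑ ω t| * jap t ^ (γ - 1) ≤ C * μ * N := by
    intro ϑ ω t ht
    have h2 : |φf ϑ ω t| ≤ μ * (N * C * jap t ^ (1 - γ)) :=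
      ((hspec ϑ ω).2.2 t).trans (mul_le_mul_of_nonneg_left (hκt t ht) hμ.le)
    have h3 : (0:ℝ) ≤ jap t ^ (γ - 1) := (Real.rpow_pos_of_pos (jap_pos t) _).le
    calc |φf ϑ ω t| * jap t ^ (γ - 1)
        ≤ (μ * (N * C * jap t ^ (1 - γ))) * jap t ^ (γ - 1) :=
          mul_le_mul_of_nonneg_right h2 h3
      _ = μ * (N * C) * (jap t ^ (1 - γ) * jap t ^ (γ - 1)) := by ring
      _ = C * μ * N := by
          rw [← Real.rpow_add (jap_pos t), show (1 - γ) + (γ - 1) = 0 by ring,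
            Real.rpow_zero, mul_one]
          ring
  have hφb : ∀ ϑ ω t : ℝ, 0 ≤ t → |φf ϑ ω t| ≤ μ * (N * C) :=
    fun ϑ ω t _ => ((hspec ϑ ω).2.2 t).trans (mul_le_mul_of_nonneg_left (hκ t) hμ.le)
  refine ⟨fun t ϑ ω => ϑ + ω * t + φf ϑ ω t, ?_, ?_, ?_, ?_⟩
  · refine ⟨C * μ * N, ?_⟩
    rintro x ⟨⟨⟨t, ht⟩, ϑ, ω⟩, rfl⟩
    show ‖((ϑ + ω * t + φf ϑ ω t - ϑ - ω * t : ℝ) : ℂ)‖ * jap t ^ (γ - 1) ≤ C * μ * N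
    rw [show (ϑ + ω * t + φf ϑ ω t - ϑ - ω * t : ℝ) = φf ϑ ω t by ring, Complex.norm_real, Real.norm_eq_abs]
    exact hkey ϑ ω t ht
  · intro t ht ϑ ω
    show ϑ + ω * t + φf ϑ ω t = ϑ + ω * t + μ * ∫ s in Set.Ioi t,
      (Complex.exp (Complex.I * ((ϑ + ω * s + φf ϑ ω s : ℝ) : ℂ)) * (starRingEnd ℂ) (z s)).im
    rw [(hspec ϑ ω).2.1 t]
    congr 2
    refine setIntegral_congr_fun measurableSet_Ioi ?_
    intro s hs
    have hzs : ζ s = z s := if_pos (ht.trans (le_of_lt hs))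
    simp only [gI, hzs]
  · have hne : Nonempty ({t : ℝ // 0 ≤ t} × ℝ × ℝ) := ⟨⟨⟨0, le_rfl⟩, 0, 0⟩⟩
    refine ciSup_le ?_
    rintro ⟨⟨t, ht⟩, ϑ, ω⟩
    show ‖((ϑ + ω * t + φf ϑ ω t - ϑ - ω * t : ℝ) : ℂ)‖ * jap t ^ (γ - 1) ≤ C * μ * N
    rw [show (ϑ + ω * t + φf ϑ ω t - ϑ - ω * t : ℝ) = φf ϑ ω t by ring, Complex.norm_real, Real.norm_eq_abs]
    exact hkey ϑ ω t ht
  · intro Θ' hb' hch' t ht ϑ ω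
    obtain ⟨B, hB⟩ := hb'
    have hψb : ∀ u : ℝ, 0 ≤ u → |Θ' u ϑ ω - ϑ - ω * u| ≤ B := by
      intro u hu
      have h1 : ‖((Θ' u ϑ ω - ϑ - ω * u : ℝ) : ℂ)‖ * jap u ^ (γ - 1) ≤ B :=
        hB ⟨(⟨⟨u, hu⟩, ϑ, ω⟩ : {t : ℝ // 0 ≤ t} × ℝ × ℝ), rfl⟩
      rw [Complex.norm_real, Real.norm_eq_abs] at h1
      have h2 : |Θ' u ϑ ω - ϑ - ω * u| ≤ |Θ' u ϑ ω - ϑ - ω * u| * jap u ^ (γ - 1) :=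
        le_mul_of_one_le_right (abs_nonneg _) (one_le_jap_rpow (by linarith))
      linarith
    have hψe : ∀ u : ℝ, 0 ≤ u → (Θ' u ϑ ω - ϑ - ω * u) =
        μ * ∫ s in Set.Ioi u, gI ζ ϑ ω (fun v => Θ' v ϑ ω - ϑ - ω * v) s := by
      intro u hu
      have h1 := hch' u hu ϑ ω
      have h2 : ∫ s in Set.Ioi u, gI ζ ϑ ω (fun v => Θ' v ϑ ω - ϑ - ω * v) s
          = ∫ s in Set.Ioi u,
            (Complex.exp (Complex.I * ((Θ' s ϑ ω : ℝ) : ℂ)) * (starRingEnd ℂ) (z s)).im := by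
        refine setIntegral_congr_fun measurableSet_Ioi ?_
        intro s hs
        have hzs : ζ s = z s := if_pos (hu.trans (le_of_lt hs))
        have h3 : (ϑ + ω * s + (Θ' s ϑ ω - ϑ - ω * s) : ℝ) = Θ' s ϑ ω := by ring
        simp only [gI, hzs, h3]
      rw [h2, h1]
      ring
    have hφe : ∀ u : ℝ, 0 ≤ u → φf ϑ ω u = μ * ∫ s in Set.Ioi u, gI ζ ϑ ω (φf ϑ ω) s :=
      fun u _ => (hspec ϑ ω).2.1 u
    have huniq := sol_unique hζm hDi hD hμ hκ hq (hspec ϑ ω).1.measurable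
      (hφb ϑ ω) hψb hφe hψe t ht
    show Θ' t ϑ ω = ϑ + ω * t + φf ϑ ω t
    have : Θ' t ϑ ω - ϑ - ω * t = φf ϑ ω t := huniq
    linarith

end AuxAsymChar2
end
end
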